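/- arXiv:1107.4794 — 4 statements merged into one kernel-verified Lean document; each statement's English description precedes it below -/
import Mathlib

section
/- Any two Urysohn metric spaces U and V with dist(U) = dist(V) are isometric, i.e., there exists a bijective isometry from U onto V. -/
/-- The set of distances realized in a metric space. -/
def distSet (X : Type*) [MetricSpace X] : Set ℝ :=
  {r : ℝ | ∃ x y : X, dist x y = r}

/-- A metric space is homogeneous if every isometry from a finite subset into the
space extends to a bijective self-isometry. -/
def IsHomogeneous (X : Type*) [MetricSpace X] : Prop :=
  ∀ F : Set X, F.Finite →
    ∀ f : F → X, (∀ x y : F, dist (f x) (f y) = dist (x : X) (y : X)) →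
      ∃ g : X ≃ᵢ X, ∀ x : F, g (x : X) = f x

/-- A metric space is universal if it is homogeneous and embeds isometrically every
finite metric space whose distances lie in its distance set. -/
def IsUniversal (X : Type*) [MetricSpace X] : Prop :=
  IsHomogeneous X ∧
    ∀ (F : Type) [MetricSpace F] [Finite F], distSet F ⊆ distSet X →
      ∃ f : F → X, ∀ a b : F, dist (f a) (f b) = dist a b

/-- An Urysohn metric space: homogeneous, separable, complete, and embedding every
separable metric space whose distances lie in its distance set. -/
def IsUrysohn (X : Type*) [MetricSpace X] : Prop :=
  IsHomogeneous X ∧ TopologicalSpace.SeparableSpace X ∧ CompleteSpace X ∧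
    ∀ (N : Type) [MetricSpace N] [TopologicalSpace.SeparableSpace N],
      distSet N ⊆ distSet X →
        ∃ f : N → X, ∀ a b : N, dist (f a) (f b) = dist a b

/-- The triple `(a, b, c)` of nonnegative reals is metric: `|a - b| ≤ c ≤ a + b`. -/
def MetricTriple (a b c : ℝ) : Prop := |a - b| ≤ c ∧ c ≤ a + b

/-- `x ⤳ (a, b, c, d)`: the triples `(x,a,b)` and `(x,c,d)` are metric and
`a ≥ max {b, c, d}`. -/
def Leads (x a b c d : ℝ) : Prop :=
  MetricTriple x a b ∧ MetricTriple x c d ∧ b ≤ a ∧ c ≤ a ∧ d ≤ a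

/-- The 4-values condition. -/
def FourValues (R : Set ℝ) : Prop :=
  ∀ a b c d, a ∈ R → b ∈ R → c ∈ R → d ∈ R →
    (∃ x ∈ R, Leads x a b c d) → ∃ y ∈ R, Leads y a d c b

/-- `0` is a limit point of `R ⊆ [0, ∞)`. -/
def ZeroLimit (R : Set ℝ) : Prop := ∀ ε > 0, ∃ r ∈ R, 0 < r ∧ r < ε

/-- `d` is a metric on the type `α`. -/
def IsMetricOn {α : Type*} (d : α → α → ℝ) : Prop :=
  (∀ x, d x x = 0) ∧ (∀ x y, d x y = d y x) ∧
    (∀ x y z, d x z ≤ d x y + d y z) ∧ ∀ x y, d x y = 0 → x = y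

/-- A restricted type function of the metric space `X`: a positive real valued function on a
finite subset of `X`, compatible with the metric, with values in the distance set of `X`. -/
def IsRestrictedType (X : Type*) [MetricSpace X] (F : Set X) (t : F → ℝ) : Prop :=
  F.Finite ∧ (∀ x, 0 < t x) ∧
    (∀ x y : F, |t x - t y| ≤ dist (x : X) (y : X) ∧ dist (x : X) (y : X) ≤ t x + t y) ∧
    ∀ x, t x ∈ distSet X

/-- A Katětov function of the metric space `X`: a positive real valued function on a finite
subset of `X` whose one-point extension `Sp(k)` is isometric to a subspace of `X`. -/
def IsKatetov (X : Type*) [MetricSpace X] (F : Set X) (k : F → ℝ) : Prop :=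
  F.Finite ∧ (∀ x, 0 < k x) ∧
    ∃ (g : F → X) (p : X),
      (∀ x y : F, dist (g x) (g y) = dist (x : X) (y : X)) ∧ ∀ x : F, dist p (g x) = k x

/-- `p` realizes the type function `t` in `X`. -/
def Realizes {X : Type*} [MetricSpace X] (F : Set X) (t : F → ℝ) (p : X) : Prop :=
  ∀ x : F, dist p (x : X) = t x

lemma distSet_subtype {X : Type*} [MetricSpace X] (s : Set X) :
    distSet ↥s ⊆ distSet X := by
  rintro r ⟨a, b, rfl⟩
  exact ⟨a, b, (Subtype.dist_eq a b).symm⟩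

lemma extStep {U V : Type} [MetricSpace U] [MetricSpace V]
    (hV : IsUrysohn V) (hsub : distSet U ⊆ distSet V)
    (l : List (U × V)) (hl : ∀ a ∈ l, ∀ b ∈ l, dist a.1 b.1 = dist a.2 b.2)
    (u : U) : ∃ v : V, ∀ a ∈ l, dist v a.2 = dist u a.1 := by
  classical
  set A : Set U := insert u (Prod.fst '' {a | a ∈ l}) with hA
  have hAfin : A.Finite := (l.finite_toSet.image Prod.fst).insert u
  haveI : Finite ↥A := hAfin.to_subtype
  obtain ⟨e, he⟩ := hV.2.2.2 ↥A (fun r hr => hsub (distSet_subtype A hr))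
  have hmemA : ∀ a ∈ l, a.1 ∈ A := fun a ha =>
    Set.mem_insert_iff.2 (Or.inr ⟨a, ha, rfl⟩)
  set c : Fin l.length → V := fun i => e ⟨(l.get i).1, hmemA _ (l.get_mem i)⟩ with hc
  have hcdist : ∀ i j, dist (c i) (c j) = dist (l.get i).1 (l.get j).1 := by
    intro i j
    rw [hc]
    rw [he, Subtype.dist_eq]
  have hcinj : ∀ i j, c i = c j → (l.get i).1 = (l.get j).1 := by
    intro i j hij
    have := hcdist i j
    rw [hij, dist_self] at this
    exact (dist_eq_zero.1 this.symm)
  set F : Set V := Set.range c with hF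
  have hffin : F.Finite := Set.finite_range c
  set f : ↥F → V := fun z => (l.get (Classical.choose z.2)).2 with hf
  have hcz : ∀ z : ↥F, c (Classical.choose z.2) = ↑z := fun z => Classical.choose_spec z.2
  have hfiso : ∀ x y : ↥F, dist (f x) (f y) = dist (x : V) (y : V) := by
    intro x y
    rw [hf]
    simp only
    rw [← hl _ (l.get_mem _) _ (l.get_mem _), ← hcdist, hcz, hcz]
  obtain ⟨g, hg⟩ := hV.1 F hffin f hfiso
  refine ⟨g (e ⟨u, Set.mem_insert _ _⟩), ?_⟩
  intro a ha
  obtain ⟨i, hi⟩ := List.mem_iff_get.1 ha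
  have hz : c i ∈ F := ⟨i, rfl⟩
  have h1 : g (c i) = f ⟨c i, hz⟩ := hg ⟨c i, hz⟩
  have h2 : f ⟨c i, hz⟩ = (l.get i).2 := by
    have hj : c (Classical.choose (⟨c i, hz⟩ : ↥F).2) = c i := hcz ⟨c i, hz⟩
    have h1' := hcinj _ _ hj
    have hd := hl (l.get (Classical.choose (⟨c i, hz⟩ : ↥F).2))
      (l.get_mem _) (l.get i) (l.get_mem i)
    rw [h1', dist_self] at hd
    exact dist_eq_zero.1 hd.symm
  have key : a.2 = g (c i) := by rw [h1, h2, hi]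
  rw [key, g.dist_eq, hc]
  simp only
  rw [he, Subtype.dist_eq]
  show dist u (l.get i).1 = dist u a.1
  rw [hi]

open scoped Classical in
noncomputable def bafNext {U V : Type} [MetricSpace U] [MetricSpace V]
    [Nonempty U] [Nonempty V] (pU : ℕ → U) (pV : ℕ → V) (l : List (U × V)) : U × V :=
  if Even l.length then
    (pU (l.length / 2),
      if h : ∃ v : V, ∀ a ∈ l, dist v a.2 = dist (pU (l.length / 2)) a.1 then h.choose
      else Classical.arbitrary V)
  else
    (if h : ∃ w : U, ∀ a ∈ l, dist w a.1 = dist (pV (l.length / 2)) a.2 then h.choose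
     else Classical.arbitrary U,
     pV (l.length / 2))

noncomputable def bafL {U V : Type} [MetricSpace U] [MetricSpace V]
    [Nonempty U] [Nonempty V] (pU : ℕ → U) (pV : ℕ → V) : ℕ → List (U × V)
  | 0 => []
  | n + 1 => bafL pU pV n ++ [bafNext pU pV (bafL pU pV n)]

noncomputable def bafSeq {U V : Type} [MetricSpace U] [MetricSpace V]
    [Nonempty U] [Nonempty V] (pU : ℕ → U) (pV : ℕ → V) (n : ℕ) : U × V :=
  bafNext pU pV (bafL pU pV n)

variable {U V : Type} [MetricSpace U] [MetricSpace V] [Nonempty U] [Nonempty V]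
  (pU : ℕ → U) (pV : ℕ → V)

lemma bafL_length (n : ℕ) : (bafL pU pV n).length = n := by
  induction n with
  | zero => simp [bafL]
  | succ n ih => simp [bafL, ih]

lemma bafSeq_mem_bafL {i n : ℕ} (hin : i < n) : bafSeq pU pV i ∈ bafL pU pV n := by
  induction n with
  | zero => omega
  | succ n ih =>
    rw [bafL, List.mem_append]
    rcases Nat.lt_succ_iff_lt_or_eq.1 hin with hlt | rfl
    · exact Or.inl (ih hlt)
    · exact Or.inr (List.mem_singleton.2 rfl)

lemma bafL_isom (hU : IsUrysohn U) (hV : IsUrysohn V) (h : distSet U = distSet V) :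
    ∀ n, ∀ a ∈ bafL pU pV n, ∀ b ∈ bafL pU pV n, dist a.1 b.1 = dist a.2 b.2 := by
  intro n
  induction n with
  | zero => simp [bafL]
  | succ n ih =>
    have key : ∀ a ∈ bafL pU pV n,
        dist (bafSeq pU pV n).1 a.1 = dist (bafSeq pU pV n).2 a.2 := by
      intro a ha
      by_cases he : Even (bafL pU pV n).length
      · have hex : ∃ v : V, ∀ a ∈ bafL pU pV n,
            dist v a.2 = dist (pU ((bafL pU pV n).length / 2)) a.1 :=
          extStep hV (le_of_eq h) (bafL pU pV n) ih _
        have hdef : bafSeq pU pV n =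
            (pU ((bafL pU pV n).length / 2), hex.choose) := by
          rw [bafSeq, bafNext, if_pos he, dif_pos hex]
        rw [hdef]
        exact (hex.choose_spec a ha).symm
      · have hex : ∃ w : U, ∀ a ∈ bafL pU pV n,
            dist w a.1 = dist (pV ((bafL pU pV n).length / 2)) a.2 := by
          have hsw : ∀ a' ∈ (bafL pU pV n).map Prod.swap,
              ∀ b' ∈ (bafL pU pV n).map Prod.swap, dist a'.1 b'.1 = dist a'.2 b'.2 := by
            intro a' ha' b' hb'
            obtain ⟨a0, ha0, rfl⟩ := List.mem_map.1 ha'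
            obtain ⟨b0, hb0, rfl⟩ := List.mem_map.1 hb'
            exact (ih a0 ha0 b0 hb0).symm
          obtain ⟨w, hw⟩ := extStep hU (le_of_eq h.symm)
            ((bafL pU pV n).map Prod.swap) hsw (pV ((bafL pU pV n).length / 2))
          refine ⟨w, fun a ha => ?_⟩
          exact hw a.swap (List.mem_map_of_mem (f := Prod.swap) ha)
        have hdef : bafSeq pU pV n =
            (hex.choose, pV ((bafL pU pV n).length / 2)) := by
          rw [bafSeq, bafNext, if_neg he, dif_pos hex]
        rw [hdef]
        exact hex.choose_spec a ha
    intro a ha b hb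
    rw [bafL, List.mem_append, List.mem_singleton] at ha hb
    rcases ha with ha | rfl <;> rcases hb with hb | rfl
    · exact ih a ha b hb
    · rw [dist_comm, dist_comm a.2]
      exact key a ha
    · exact key b hb
    · simp

lemma bafSeq_fst_even (k : ℕ) : (bafSeq pU pV (2 * k)).1 = pU k := by
  have he : Even ((bafL pU pV (2 * k)).length) := by
    rw [bafL_length]; exact even_two_mul k
  rw [bafSeq, bafNext, if_pos he]
  simp only [bafL_length]
  congr 1
  omega

lemma bafSeq_snd_odd (k : ℕ) : (bafSeq pU pV (2 * k + 1)).2 = pV k := by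
  have he : ¬ Even ((bafL pU pV (2 * k + 1)).length) := by
    rw [bafL_length]
    simp [Nat.even_add_one, Nat.even_mul]
  rw [bafSeq, bafNext, if_neg he]
  simp only [bafL_length]
  congr 1
  omega

open Filter Topology in
lemma glueMap {U V : Type} [MetricSpace U] [MetricSpace V] [CompleteSpace V]
    (p : ℕ → U) (q : ℕ → V) (hpq : ∀ i j, dist (p i) (p j) = dist (q i) (q j))
    (hp : DenseRange p) :
    ∃ Φ : U → V, (∀ i, Φ (p i) = q i) ∧ ∀ x y, dist (Φ x) (Φ y) = dist x y := by
  classical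
  have h0 : Tendsto (fun n : ℕ => 1 / ((n : ℝ) + 1)) atTop (𝓝 0) :=
    tendsto_one_div_add_atTop_nhds_zero_nat
  have happrox : ∀ (u : U) (n : ℕ), ∃ i, dist (p i) u < 1 / (n + 1) := by
    intro u n
    obtain ⟨i, hi⟩ := hp.exists_dist_lt u (by positivity : (0:ℝ) < 1 / (n + 1))
    exact ⟨i, by rwa [dist_comm]⟩
  choose K hK using happrox
  have htendp : ∀ u : U, Tendsto (fun n => p (K u n)) atTop (𝓝 u) := by
    intro u
    rw [tendsto_iff_dist_tendsto_zero]
    exact squeeze_zero (fun n => dist_nonneg) (fun n => le_of_lt (hK u n)) h0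
  have hcq : ∀ u, CauchySeq (fun n => q (K u n)) := by
    intro u
    have hc : CauchySeq (fun n => p (K u n)) := (htendp u).cauchySeq
    rw [Metric.cauchySeq_iff] at hc ⊢
    intro ε hε
    obtain ⟨N, hN⟩ := hc ε hε
    exact ⟨N, fun m hm n hn => by rw [← hpq]; exact hN m hm n hn⟩
  have hlim : ∀ u, ∃ v, Tendsto (fun n => q (K u n)) atTop (𝓝 v) :=
    fun u => cauchySeq_tendsto_of_complete (hcq u)
  choose Φ hΦ using hlim
  have hdist : ∀ x y, dist (Φ x) (Φ y) = dist x y := by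
    intro x y
    have h1 : Tendsto (fun n => dist (q (K x n)) (q (K y n))) atTop
        (𝓝 (dist (Φ x) (Φ y))) := (hΦ x).dist (hΦ y)
    have h2 : Tendsto (fun n => dist (p (K x n)) (p (K y n))) atTop
        (𝓝 (dist x y)) := (htendp x).dist (htendp y)
    have heq : (fun n => dist (q (K x n)) (q (K y n)))
        = fun n => dist (p (K x n)) (p (K y n)) := funext fun n => (hpq _ _).symm
    rw [heq] at h1
    exact tendsto_nhds_unique h1 h2
  refine ⟨Φ, fun i => ?_, hdist⟩
  have h1 : Tendsto (fun n => q (K (p i) n)) atTop (𝓝 (q i)) := by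
    rw [tendsto_iff_dist_tendsto_zero]
    have heq : (fun n => dist (q (K (p i) n)) (q i))
        = fun n => dist (p (K (p i) n)) (p i) := funext fun n => (hpq _ _).symm
    rw [heq]
    exact squeeze_zero (fun n => dist_nonneg) (fun n => le_of_lt (hK (p i) n)) h0
  exact tendsto_nhds_unique (hΦ (p i)) h1

/-- Any two Urysohn metric spaces with the same distance set are isometric. -/
theorem statement2 (U V : Type) [MetricSpace U] [MetricSpace V]
    (hU : IsUrysohn U) (hV : IsUrysohn V) (h : distSet U = distSet V) :
    Nonempty (U ≃ᵢ V) := by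
  classical
  by_cases hne : Nonempty U
  · haveI := hne
    haveI hneV : Nonempty V := by
      have h0 : (0 : ℝ) ∈ distSet U :=
        ⟨Classical.arbitrary U, Classical.arbitrary U, dist_self _⟩
      rw [h] at h0
      obtain ⟨x, -, -⟩ := h0
      exact ⟨x⟩
    haveI : TopologicalSpace.SeparableSpace U := hU.2.1
    haveI : TopologicalSpace.SeparableSpace V := hV.2.1
    haveI : CompleteSpace U := hU.2.2.1
    haveI : CompleteSpace V := hV.2.2.1
    set pU := TopologicalSpace.denseSeq U with hpU
    set pV := TopologicalSpace.denseSeq V with hpV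
    set p : ℕ → U := fun n => (bafSeq pU pV n).1 with hp
    set q : ℕ → V := fun n => (bafSeq pU pV n).2 with hq
    have hpq : ∀ i j, dist (p i) (p j) = dist (q i) (q j) := by
      intro i j
      exact bafL_isom pU pV hU hV h (max i j + 1)
        _ (bafSeq_mem_bafL pU pV (by omega))
        _ (bafSeq_mem_bafL pU pV (by omega))
    have hpd : DenseRange p := by
      have hsub : Set.range pU ⊆ Set.range p := by
        rintro _ ⟨k, rfl⟩
        exact ⟨2 * k, bafSeq_fst_even pU pV k⟩
      exact Dense.mono hsub (TopologicalSpace.denseRange_denseSeq U)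
    have hqd : DenseRange q := by
      have hsub : Set.range pV ⊆ Set.range q := by
        rintro _ ⟨k, rfl⟩
        exact ⟨2 * k + 1, bafSeq_snd_odd pU pV k⟩
      exact Dense.mono hsub (TopologicalSpace.denseRange_denseSeq V)
    obtain ⟨Φ, hΦp, hΦd⟩ := glueMap p q hpq hpd
    obtain ⟨Ψ, hΨq, hΨd⟩ := glueMap q p (fun i j => (hpq i j).symm) hqd
    have hΨΦ : Ψ ∘ Φ = id := by
      refine Continuous.ext_on hpd
        (((Isometry.of_dist_eq hΨd).continuous).comp
          ((Isometry.of_dist_eq hΦd).continuous)) continuous_id ?_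
      rintro _ ⟨i, rfl⟩
      simp [hΦp, hΨq]
    have hΦΨ : Φ ∘ Ψ = id := by
      refine Continuous.ext_on hqd
        (((Isometry.of_dist_eq hΦd).continuous).comp
          ((Isometry.of_dist_eq hΨd).continuous)) continuous_id ?_
      rintro _ ⟨i, rfl⟩
      simp [hΦp, hΨq]
    exact ⟨⟨⟨Φ, Ψ, fun x => congrFun hΨΦ x, fun y => congrFun hΦΨ y⟩,
      Isometry.of_dist_eq hΦd⟩⟩
  · haveI hUe : IsEmpty U := not_nonempty_iff.1 hne
    haveI hVe : IsEmpty V := by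
      by_contra hv
      rw [not_isEmpty_iff] at hv
      have h0 : (0 : ℝ) ∈ distSet V :=
        ⟨Classical.arbitrary V, Classical.arbitrary V, dist_self _⟩
      rw [← h] at h0
      obtain ⟨x, -, -⟩ := h0
      exact hne ⟨x⟩
    exact ⟨⟨Equiv.equivOfIsEmpty U V, Isometry.of_dist_eq fun a => isEmptyElim a⟩⟩
end

section
/- Any two homogeneous, separable and complete metric spaces M and N with the same age are isometric, i.e., there exists a bijective isometry from M onto N. -/
open Filter Topology in
private theorem extend_right {M N : Type} [MetricSpace M] [MetricSpace N]
    (hN : IsHomogeneous N)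
    (hMN : ∀ F : Set M, F.Finite →
      ∃ f : F → N, ∀ x y : F, dist (f x) (f y) = dist (x : M) (y : M))
    (l : List (M × N)) (hl : ∀ p ∈ l, ∀ q ∈ l, dist p.2 q.2 = dist p.1 q.1)
    (m : M) : ∃ p : N, ∀ q ∈ l, dist q.2 p = dist q.1 m := by
  classical
  set S : Set M := insert m {x | ∃ q ∈ l, q.1 = x} with hS
  have hSfin : S.Finite := by
    apply Set.Finite.insert
    have hsub : {x : M | ∃ q ∈ l, q.1 = x} ⊆ Prod.fst '' {q | q ∈ l} := by
      rintro x ⟨q, hq, rfl⟩; exact ⟨q, hq, rfl⟩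
    exact (l.finite_toSet.image Prod.fst).subset hsub
  obtain ⟨g, hg⟩ := hMN S hSfin
  have ginj : Function.Injective g := by
    intro x y hxy
    have h0 : dist (g x) (g y) = dist (x : M) (y : M) := hg x y
    rw [hxy, dist_self] at h0
    exact Subtype.ext (eq_of_dist_eq_zero h0.symm)
  have : Finite S := hSfin.to_subtype
  set T : Set N := {y | ∃ q ∈ l, ∃ hq : q.1 ∈ S, g ⟨q.1, hq⟩ = y} with hT
  have hTfin : T.Finite := by
    apply (Set.finite_range g).subset
    rintro y ⟨q, hq, hqS, rfl⟩; exact ⟨_, rfl⟩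
  set φ : T → N := fun t => (Classical.choose t.2).2 with hφ
  -- key: choice property
  have key : ∀ (t : T) (q : M × N) (hq : q ∈ l) (hqS : q.1 ∈ S),
      g ⟨q.1, hqS⟩ = (t : N) → φ t = q.2 := by
    intro t q hq hqS hgt
    obtain ⟨hq'l, hq'S, hq'g⟩ := Classical.choose_spec t.2
    set q' := Classical.choose t.2
    have : q'.1 = q.1 := by
      have := ginj (hq'g.trans hgt.symm)
      exact congrArg Subtype.val this
    have hd : dist q'.2 q.2 = dist q'.1 q.1 := hl q' hq'l q hq
    rw [this, dist_self] at hd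
    exact eq_of_dist_eq_zero hd
  have φiso : ∀ t t' : T, dist (φ t) (φ t') = dist (t : N) (t' : N) := by
    intro t t'
    obtain ⟨h1, hS1, hg1⟩ := Classical.choose_spec t.2
    obtain ⟨h2, hS2, hg2⟩ := Classical.choose_spec t'.2
    calc dist (φ t) (φ t') = dist (Classical.choose t.2).1 (Classical.choose t'.2).1 :=
          hl _ h1 _ h2
      _ = dist (g ⟨(Classical.choose t.2).1, hS1⟩) (g ⟨(Classical.choose t'.2).1, hS2⟩) :=
          (hg ⟨_, hS1⟩ ⟨_, hS2⟩).symm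
      _ = dist (t : N) (t' : N) := by rw [hg1, hg2]
  obtain ⟨h, hh⟩ := hN T hTfin φ φiso
  refine ⟨h (g ⟨m, Set.mem_insert _ _⟩), ?_⟩
  intro q hq
  have hqS : q.1 ∈ S := Set.mem_insert_iff.mpr (Or.inr ⟨q, hq, rfl⟩)
  set t : T := ⟨g ⟨q.1, hqS⟩, ⟨q, hq, hqS, rfl⟩⟩ with ht
  have h1 : h (t : N) = q.2 := (hh t).trans (key t q hq hqS rfl)
  calc dist q.2 (h (g ⟨m, Set.mem_insert _ _⟩))
      = dist (h (t : N)) (h (g ⟨m, Set.mem_insert _ _⟩)) := by rw [h1]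
    _ = dist (t : N) (g ⟨m, Set.mem_insert _ _⟩) := h.dist_eq _ _
    _ = dist q.1 m := hg _ _

open Filter Topology in
private theorem exists_iso_map {M N : Type} [MetricSpace M] [MetricSpace N] [CompleteSpace N]
    (a : ℕ → M) (b : ℕ → N)
    (hab : ∀ i j, dist (b i) (b j) = dist (a i) (a j))
    (ha : DenseRange a) :
    ∃ Φ : M → N, (∀ x y, dist (Φ x) (Φ y) = dist x y) ∧ ∀ i, Φ (a i) = b i := by
  classical
  -- approximating sequences
  have hsel : ∀ (x : M) (k : ℕ), ∃ i, dist x (a i) < 1 / (k + 1) := by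
    intro x k
    exact Metric.denseRange_iff.mp ha x (1 / (k + 1)) (by positivity)
  set s : M → ℕ → ℕ := fun x k => Classical.choose (hsel x k) with hs
  have hsd : ∀ x k, dist x (a (s x k)) < 1 / (k + 1) := fun x k => Classical.choose_spec (hsel x k)
  have hconv : ∀ x : M, Tendsto (fun k => a (s x k)) atTop (𝓝 x) := by
    intro x
    rw [tendsto_iff_dist_tendsto_zero]
    apply squeeze_zero (fun k => dist_nonneg)
      (fun k => le_of_lt (by rw [dist_comm]; exact hsd x k))
    exact tendsto_one_div_add_atTop_nhds_zero_nat
  have hcauchy : ∀ x : M, CauchySeq (fun k => b (s x k)) := by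
    intro x
    have h1 : CauchySeq (fun k => a (s x k)) := (hconv x).cauchySeq
    rw [Metric.cauchySeq_iff] at h1 ⊢
    intro ε hε
    obtain ⟨K, hK⟩ := h1 ε hε
    exact ⟨K, fun p hp q hq => by rw [hab]; exact hK p hp q hq⟩
  have hlim : ∀ x : M, ∃ y : N, Tendsto (fun k => b (s x k)) atTop (𝓝 y) := by
    intro x; exact cauchySeq_tendsto_of_complete (hcauchy x)
  set Φ : M → N := fun x => Classical.choose (hlim x) with hΦ
  have hΦlim : ∀ x, Tendsto (fun k => b (s x k)) atTop (𝓝 (Φ x)) :=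
    fun x => Classical.choose_spec (hlim x)
  have hiso : ∀ x y, dist (Φ x) (Φ y) = dist x y := by
    intro x y
    have h1 : Tendsto (fun k => dist (b (s x k)) (b (s y k))) atTop (𝓝 (dist (Φ x) (Φ y))) :=
      (hΦlim x).dist (hΦlim y)
    have h2 : Tendsto (fun k => dist (b (s x k)) (b (s y k))) atTop (𝓝 (dist x y)) := by
      have := (hconv x).dist (hconv y)
      simpa only [hab] using this
    exact tendsto_nhds_unique h1 h2
  refine ⟨Φ, hiso, fun i => ?_⟩
  have h1 : Tendsto (fun k => dist (b (s (a i) k)) (b i)) atTop (𝓝 (dist (Φ (a i)) (b i))) :=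
    (hΦlim (a i)).dist tendsto_const_nhds
  have h2 : Tendsto (fun k => dist (b (s (a i) k)) (b i)) atTop (𝓝 0) := by
    have := (hconv (a i)).dist (tendsto_const_nhds : Tendsto (fun _ : ℕ => a i) atTop (𝓝 (a i)))
    rw [dist_self] at this
    simpa only [hab] using this
  exact eq_of_dist_eq_zero (tendsto_nhds_unique h1 h2)

open Filter Topology in
private theorem iso_of_dense {M N : Type} [MetricSpace M] [MetricSpace N]
    [CompleteSpace M] [CompleteSpace N]
    (a : ℕ → M) (b : ℕ → N) (hab : ∀ i j, dist (b i) (b j) = dist (a i) (a j))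
    (ha : DenseRange a) (hb : DenseRange b) : Nonempty (M ≃ᵢ N) := by
  obtain ⟨Φ, hΦiso, hΦ⟩ := exists_iso_map a b hab ha
  obtain ⟨Ψ, hΨiso, hΨ⟩ := exists_iso_map b a (fun i j => (hab i j).symm) hb
  have hΦc : Continuous Φ := (Isometry.of_dist_eq hΦiso).continuous
  have hΨc : Continuous Ψ := (Isometry.of_dist_eq hΨiso).continuous
  have left : Ψ ∘ Φ = id :=
    ha.equalizer (hΨc.comp hΦc) continuous_id
      (funext fun i => by simp [Function.comp, hΦ, hΨ])
  have right : Φ ∘ Ψ = id :=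
    hb.equalizer (hΦc.comp hΨc) continuous_id
      (funext fun i => by simp [Function.comp, hΦ, hΨ])
  exact ⟨⟨⟨Φ, Ψ, fun x => congrFun left x, fun y => congrFun right y⟩,
    Isometry.of_dist_eq hΦiso⟩⟩


/-- Any two homogeneous, separable, complete metric spaces with the same age
are isometric. -/
theorem statement3 (M N : Type) [MetricSpace M] [MetricSpace N]
    [TopologicalSpace.SeparableSpace M] [CompleteSpace M]
    [TopologicalSpace.SeparableSpace N] [CompleteSpace N]
    (hM : IsHomogeneous M) (hN : IsHomogeneous N)
    (hMN : ∀ F : Set M, F.Finite →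
      ∃ f : F → N, ∀ x y : F, dist (f x) (f y) = dist (x : M) (y : M))
    (hNM : ∀ F : Set N, F.Finite →
      ∃ f : F → M, ∀ x y : F, dist (f x) (f y) = dist (x : N) (y : N)) :
    Nonempty (M ≃ᵢ N) := by
  classical
  by_cases hme : IsEmpty M
  · have hne : IsEmpty N := by
      by_contra h
      rw [not_isEmpty_iff] at h
      obtain ⟨n⟩ := h
      obtain ⟨f, -⟩ := hNM {n} (Set.finite_singleton n)
      exact hme.elim (f ⟨n, rfl⟩)
    exact ⟨⟨Equiv.equivOfIsEmpty M N, fun x => isEmptyElim x⟩⟩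
  rw [not_isEmpty_iff] at hme
  have hne : Nonempty N := by
    obtain ⟨m⟩ := hme
    obtain ⟨f, -⟩ := hMN {m} (Set.finite_singleton m)
    exact ⟨f ⟨m, rfl⟩⟩
  obtain ⟨u, hu⟩ := TopologicalSpace.exists_dense_seq M
  obtain ⟨v, hv⟩ := TopologicalSpace.exists_dense_seq N
  -- left extension from right extension
  have extend_left : ∀ (l : List (M × N)),
      (∀ p ∈ l, ∀ q ∈ l, dist p.2 q.2 = dist p.1 q.1) →
      ∀ n : N, ∃ p : M, ∀ q ∈ l, dist q.1 p = dist q.2 n := by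
    intro l hl n
    have hl' : ∀ p ∈ l.map Prod.swap, ∀ q ∈ l.map Prod.swap,
        dist p.2 q.2 = dist p.1 q.1 := by
      simp only [List.mem_map]
      rintro p ⟨p', hp', rfl⟩ q ⟨q', hq', rfl⟩
      exact (hl p' hp' q' hq').symm
    obtain ⟨p, hp⟩ := extend_right hM hNM (l.map Prod.swap) hl' n
    refine ⟨p, fun q hq => ?_⟩
    exact hp q.swap (List.mem_map_of_mem (f := Prod.swap) hq)
  -- the step function
  set IsoL : List (M × N) → Prop :=
    fun l => ∀ p ∈ l, ∀ q ∈ l, dist p.2 q.2 = dist p.1 q.1 with hIsoL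
  set step : List (M × N) → ℕ → M × N := fun l n =>
    if hl : IsoL l then
      if n % 2 = 0 then
        (u (n / 2), Classical.choose (extend_right hN hMN l hl (u (n / 2))))
      else
        (Classical.choose (extend_left l hl (v (n / 2))), v (n / 2))
    else Classical.arbitrary _ with hstep
  set c : ℕ → List (M × N) := fun n => Nat.rec [] (fun k l => l ++ [step l k]) n with hc
  have hc0 : c 0 = [] := rfl
  have hcs : ∀ n, c (n + 1) = c n ++ [step (c n) n] := fun n => rfl
  -- appending preserves the invariant
  have append_inv : ∀ (l : List (M × N)) (m : M) (p : N), IsoL l →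
      (∀ q ∈ l, dist q.2 p = dist q.1 m) → IsoL (l ++ [(m, p)]) := by
    intro l m p hl hp q hq r hr
    rw [List.mem_append, List.mem_singleton] at hq hr
    rcases hq with hq | rfl <;> rcases hr with hr | rfl
    · exact hl q hq r hr
    · exact hp q hq
    · rw [dist_comm, dist_comm (m, p).1 r.1]; exact hp r hr
    · simp [dist_self]
  -- invariant holds for all c n
  have hinv : ∀ n, IsoL (c n) := by
    intro n
    induction n with
    | zero => intro p hp; simp [hc0] at hp
    | succ k ih =>
        rw [hcs k, hstep]
        simp only [dif_pos ih]
        by_cases hk : k % 2 = 0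
        · rw [if_pos hk]
          exact append_inv _ _ _ ih fun q hq =>
            Classical.choose_spec (extend_right hN hMN (c k) ih (u (k / 2))) q hq
        · rw [if_neg hk]
          refine append_inv _ _ _ ih fun q hq => ?_
          have := Classical.choose_spec (extend_left (c k) ih (v (k / 2))) q hq
          rw [dist_comm, this, dist_comm]
  set a : ℕ → M := fun n => (step (c n) n).1 with hA
  set b : ℕ → N := fun n => (step (c n) n).2 with hB
  -- membership
  have hmem : ∀ n k, n < k → (a n, b n) ∈ c k := by
    intro n k hnk
    induction k with
    | zero => omega
    | succ j ih =>
        rw [hcs j, List.mem_append]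
        rcases Nat.lt_succ_iff_lt_or_eq.mp hnk with h | rfl
        · exact Or.inl (ih h)
        · exact Or.inr (by simp [hA, hB])
  have hab : ∀ i j, dist (b i) (b j) = dist (a i) (a j) := by
    intro i j
    have h1 : (a i, b i) ∈ c (max i j + 1) := hmem i _ (Nat.lt_succ_of_le (le_max_left i j))
    have h2 : (a j, b j) ∈ c (max i j + 1) := hmem j _ (Nat.lt_succ_of_le (le_max_right i j))
    exact hinv (max i j + 1) _ h1 _ h2
  -- a hits u, b hits v
  have hau : ∀ k, a (2 * k) = u k := by
    intro k
    rw [hA]; simp only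
    rw [hstep]; simp only [dif_pos (hinv (2 * k))]
    rw [if_pos (by omega)]
    simp only
    congr 1
    omega
  have hbv : ∀ k, b (2 * k + 1) = v k := by
    intro k
    rw [hB]; simp only
    rw [hstep]; simp only [dif_pos (hinv (2 * k + 1))]
    rw [if_neg (by omega)]
    simp only
    congr 1
    omega
  have ha : DenseRange a := by
    have : Set.range u ⊆ Set.range a := by
      rintro x ⟨k, rfl⟩; exact ⟨2 * k, hau k⟩
    exact hu.mono this
  have hb : DenseRange b := by
    have : Set.range v ⊆ Set.range b := by
      rintro x ⟨k, rfl⟩; exact ⟨2 * k + 1, hbv k⟩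
    exact hv.mono this
  exact iso_of_dense a b hab ha hb
end

section
/- Let M be a homogeneous separable metric space which isometrically embeds every finite metric space F with dist(F) ⊆ dist(M). Then the metric completion of M is homogeneous. -/
namespace S5

lemma homog_transport {Y Z : Type*} [MetricSpace Y] [MetricSpace Z]
    (e : Y ≃ᵢ Z) (h : IsHomogeneous Y) : IsHomogeneous Z := by
  intro F hF f hf
  classical
  set F' : Set Y := e.symm '' F with hF'def
  have hF'fin : F'.Finite := hF.image _
  have hmem : ∀ y : F', (e (y : Y)) ∈ F := by
    rintro ⟨y, ⟨z, hz, rfl⟩⟩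
    simpa using hz
  set f' : F' → Y := fun y => e.symm (f ⟨e (y : Y), hmem y⟩) with hf'def
  have hf'iso : ∀ y₁ y₂ : F', dist (f' y₁) (f' y₂) = dist (y₁ : Y) (y₂ : Y) := by
    intro y₁ y₂
    rw [hf'def]
    simp only []
    rw [e.symm.dist_eq]
    rw [hf ⟨e (y₁ : Y), hmem y₁⟩ ⟨e (y₂ : Y), hmem y₂⟩]
    exact e.dist_eq _ _
  obtain ⟨g', hg'⟩ := h F' hF'fin f' hf'iso
  refine ⟨(e.symm.trans g').trans e, ?_⟩
  intro x
  have hx' : e.symm (x : Z) ∈ F' := ⟨(x : Z), x.2, rfl⟩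
  have h1 : g' (e.symm (x : Z)) = f' ⟨e.symm (x : Z), hx'⟩ := hg' ⟨e.symm (x : Z), hx'⟩
  have h2 : f' ⟨e.symm (x : Z), hx'⟩ = e.symm (f x) := by
    rw [hf'def]
    simp only []
    congr 1
    apply congrArg f
    apply Subtype.ext
    simp
  simp only [IsometryEquiv.trans_apply]
  rw [h1, h2, e.apply_symm_apply]


variable {M : Type} [MetricSpace M]

lemma dist_mem_distSet (x y : M) : dist x y ∈ distSet M := ⟨x, y, rfl⟩

theorem realize (hhom : IsHomogeneous M)
    (hemb : ∀ (F : Type) [MetricSpace F] [Finite F], distSet F ⊆ distSet M →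
      ∃ f : F → M, ∀ a b : F, dist (f a) (f b) = dist a b)
    [Nonempty M]
    (k : ℕ) (p : ℕ → M) (t : ℕ → ℝ)
    (hinj : ∀ i < k, ∀ j < k, i ≠ j → p i ≠ p j)
    (htR : ∀ i < k, t i ∈ distSet M)
    (htpos : ∀ i < k, 0 < t i)
    (hK1 : ∀ i < k, ∀ j < k, |t i - t j| ≤ dist (p i) (p j))
    (hK2 : ∀ i < k, ∀ j < k, dist (p i) (p j) ≤ t i + t j) :
    ∃ q : M, ∀ i < k, dist q (p i) = t i := by
  classical
  set Z := Option (Fin k) with hZ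
  let dZ : Z → Z → ℝ := fun o o' =>
    match o, o' with
    | some i, some j => dist (p i) (p j)
    | some i, none => t i
    | none, some j => t j
    | none, none => 0
  letI : MetricSpace Z :=
    { dist := dZ
      dist_self := by rintro (_ | i) <;> simp [dZ]
      dist_comm := by
        rintro (_ | i) (_ | j) <;> simp [dZ, dist_comm]
      dist_triangle := by
        rintro (_ | i) (_ | j) (_ | l) <;> simp only [dZ]
        · simp
        · simp
        · have := htpos j j.2; linarith
        · have h := abs_le.1 (hK1 j j.2 l l.2); linarith
        · simp
        · exact hK2 i i.2 l l.2
        · have h := abs_le.1 (hK1 i i.2 j j.2); linarith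
        · exact dist_triangle (p i) (p j) (p l)
      eq_of_dist_eq_zero := by
        rintro (_ | i) (_ | j) h
        · rfl
        · have := htpos j j.2
          simp only [dZ] at h; linarith
        · have := htpos i i.2
          simp only [dZ] at h; linarith
        · simp only [dZ] at h
          have hpp : p i = p j := eq_of_dist_eq_zero h
          have : (i : ℕ) = (j : ℕ) := by
            by_contra hne
            exact hinj i i.2 j j.2 hne hpp
          exact congrArg some (Fin.ext this) }
  have hsub : distSet Z ⊆ distSet M := by
    rintro r ⟨o, o', rfl⟩
    match o, o' with
    | some i, some j => exact dist_mem_distSet (p i) (p j)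
    | some i, none => exact htR i i.2
    | none, some j => exact htR j j.2
    | none, none =>
        exact ⟨Classical.arbitrary M, Classical.arbitrary M, dist_self _⟩
  obtain ⟨e, he⟩ := hemb Z hsub
  have einj : Function.Injective e := by
    intro a b hab
    have : dist a b = (0 : ℝ) := by rw [← he a b, hab, dist_self]
    exact eq_of_dist_eq_zero this
  set S : Set M := Set.range (fun i : Fin k => e (some i)) with hS
  have hSfin : S.Finite := Set.finite_range _
  have ymem : ∀ y : S, ∃ i : Fin k, e (some i) = (y : M) := fun y => y.2
  let f : S → M := fun y => p ((Classical.choose (ymem y)).1)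
  have hf : ∀ (y : S), e (some (Classical.choose (ymem y))) = (y : M) :=
    fun y => Classical.choose_spec (ymem y)
  have hfiso : ∀ y₁ y₂ : S, dist (f y₁) (f y₂) = dist (y₁ : M) (y₂ : M) := by
    intro y₁ y₂
    have h1 := hf y₁; have h2 := hf y₂
    rw [← h1, ← h2, he]
    rfl
  obtain ⟨g, hg⟩ := hhom S hSfin f hfiso
  refine ⟨g (e none), fun i hi => ?_⟩
  have hmem : e (some (⟨i, hi⟩ : Fin k)) ∈ S := ⟨⟨i, hi⟩, rfl⟩
  set y : S := ⟨e (some ⟨i, hi⟩), hmem⟩ with hy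
  have hfy : f y = p i := by
    have h1 := hf y
    have : some (Classical.choose (ymem y)) = some (⟨i, hi⟩ : Fin k) := einj h1
    have h2 : Classical.choose (ymem y) = (⟨i, hi⟩ : Fin k) := by
      injection this
    simp only [f, h2]
  have hgy : g (y : M) = p i := by rw [hg y, hfy]
  calc dist (g (e none)) (p i) = dist (g (e none)) (g (y : M)) := by rw [hgy]
    _ = dist (e none) (e (some ⟨i, hi⟩)) := by rw [g.dist_eq]
    _ = dist (none : Z) (some ⟨i, hi⟩) := he _ _
    _ = t i := rfl


lemma zl_pick (hz : ZeroLimit (distSet M)) (m : ℕ) (c : ℝ) (hc : 0 < c) :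
    ∃ ρ : ℕ → ℝ, (∀ i, 0 < ρ i ∧ ρ i < c) ∧ (∀ i < m, ρ i ∈ distSet M) ∧
      (∀ i, i + 1 < m → 2 * ρ i < ρ (i + 1)) := by
  induction m with
  | zero =>
      exact ⟨fun _ => c / 2, fun _ => ⟨by linarith, by linarith⟩,
        fun i hi => absurd hi (Nat.not_lt_zero i), fun i hi => absurd hi (Nat.not_lt_zero _)⟩
  | succ m ih =>
      obtain ⟨ρ, h1, h2, h3⟩ := ih
      obtain ⟨r, hrR, hrpos, hrlt⟩ := hz (min c (ρ 0 / 2)) (by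
        have := (h1 0).1; positivity)
      refine ⟨fun i => match i with | 0 => r | (i+1) => ρ i, ?_, ?_, ?_⟩
      · rintro (_ | i)
        · exact ⟨hrpos, lt_of_lt_of_le hrlt (min_le_left _ _)⟩
        · exact h1 i
      · rintro (_ | i) hi
        · exact hrR
        · exact h2 i (Nat.succ_lt_succ_iff.mp hi)
      · rintro (_ | i) hi
        · have : r < ρ 0 / 2 := lt_of_lt_of_le hrlt (min_le_right _ _)
          simpa using by linarith
        · have := h3 i (Nat.succ_lt_succ_iff.mp hi)
          simpa using this


theorem xc (hhom : IsHomogeneous M)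
    (hemb : ∀ (F : Type) [MetricSpace F] [Finite F], distSet F ⊆ distSet M →
      ∃ f : F → M, ∀ a b : F, dist (f a) (f b) = dist a b)
    [Nonempty M]
    (m : ℕ) (z w : ℕ → M) (ρ : ℕ → ℝ) (β : ℝ) (hβ : 0 < β)
    (hρR : ∀ i < m, ρ i ∈ distSet M) (hρpos : ∀ i < m, 0 < ρ i)
    (hgap : ∀ j i, j < i → i < m → ρ j + β ≤ ρ i)
    (happ : ∀ i < m, ∀ j < m, i ≠ j → |dist (z i) (z j) - dist (w i) (w j)| ≤ β)
    (hsep : ∀ i < m, ∀ j < m, i ≠ j → ρ i + ρ j + β < dist (z i) (z j)) :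
    ∃ x : ℕ → M, (∀ i < m, ∀ j < m, dist (x i) (x j) = dist (z i) (z j)) ∧
      (∀ i < m, dist (x i) (w i) = ρ i) := by
  classical
  suffices h : ∀ n, n ≤ m → ∃ x : ℕ → M,
      (∀ i < n, ∀ j < n, dist (x i) (x j) = dist (z i) (z j)) ∧
      (∀ i < n, dist (x i) (w i) = ρ i) from h m le_rfl
  intro n
  induction n with
  | zero => exact fun _ => ⟨fun _ => Classical.arbitrary M,
      fun i hi => absurd hi (Nat.not_lt_zero _), fun i hi => absurd hi (Nat.not_lt_zero _)⟩
  | succ n ih =>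
      intro hn
      obtain ⟨x, hx1, hx2⟩ := ih (le_trans (Nat.le_succ n) hn)
      have hnm : n < m := Nat.lt_of_succ_le hn
      have hjm : ∀ j, j < n → j < m := fun j hj => lt_trans hj hnm
      have hjn : ∀ j, j < n → j ≠ n := fun j hj => Nat.ne_of_lt hj
      have hzposm : ∀ i, i < m → ∀ j, j < m → i ≠ j → 0 < dist (z i) (z j) := by
        intro i hi j hj hij
        have := hsep i hi j hj hij
        have h1 := hρpos i hi; have h2 := hρpos j hj
        linarith
      have est : ∀ j, j < n → dist (z n) (z j) - ρ n ≤ dist (x j) (w n) ∧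
          dist (x j) (w n) ≤ dist (z n) (z j) + ρ n := by
        intro j hj
        have t1 : |dist (x j) (w n) - dist (w j) (w n)| ≤ dist (x j) (w j) :=
          abs_dist_sub_le _ _ _
        have t2 := hx2 j hj
        have t3 := happ n hnm j (hjm j hj) (hjn j hj).symm
        have t4 := hgap j n hj hnm
        rw [t2] at t1
        have t1a := abs_le.mp t1
        have t3a := abs_le.mp t3
        rw [dist_comm (w j) (w n)] at t1a
        constructor
        · linarith [t1a.1, t3a.1, t3a.2]
        · linarith [t1a.2, t3a.2, t3a.1]
      set P : ℕ → M := fun j => if j = n then w n else x j with hP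
      set T : ℕ → ℝ := fun j => if j = n then ρ n else dist (z n) (z j) with hT
      have hPn : P n = w n := if_pos rfl
      have hTn : T n = ρ n := if_pos rfl
      have hPj : ∀ j, j < n → P j = x j := fun j hj => if_neg (hjn j hj)
      have hTj : ∀ j, j < n → T j = dist (z n) (z j) := fun j hj => if_neg (hjn j hj)
      obtain ⟨q, hq⟩ := realize hhom hemb (n+1) P T
        (by -- hinj
          intro i hi j hj hij
          by_cases hin : i = n <;> by_cases hjn2 : j = n
          · rw [hin, hjn2] at hij; exact absurd rfl hij
          · have hj' : j < n := by omega
            rw [hin, hPn, hPj j hj']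
            intro hc
            have h0 : dist (x j) (w n) = 0 := by rw [← hc, dist_self]
            have e1 := (est j hj').1
            have e2 := hsep n hnm j (hjm j hj') (hjn j hj').symm
            have e3 := hρpos j (hjm j hj')
            linarith [hβ]
          · have hi' : i < n := by omega
            rw [hjn2, hPn, hPj i hi']
            intro hc
            have h0 : dist (x i) (w n) = 0 := by rw [hc, dist_self]
            have e1 := (est i hi').1
            have e2 := hsep n hnm i (hjm i hi') (hjn i hi').symm
            have e3 := hρpos i (hjm i hi')
            linarith [hβ]
          · have hi' : i < n := by omega
            have hj' : j < n := by omega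
            rw [hPj i hi', hPj j hj']
            intro hc
            have h0 : dist (x i) (x j) = 0 := by rw [hc, dist_self]
            rw [hx1 i hi' j hj'] at h0
            have := hzposm i (hjm i hi') j (hjm j hj') hij
            linarith)
        (by -- htR
          intro i hi
          by_cases hin : i = n
          · rw [hin, hTn]; exact hρR n hnm
          · have hi' : i < n := by omega
            rw [hTj i hi']; exact dist_mem_distSet _ _)
        (by -- htpos
          intro i hi
          by_cases hin : i = n
          · rw [hin, hTn]; exact hρpos n hnm
          · have hi' : i < n := by omega
            rw [hTj i hi']
            exact hzposm n hnm i (hjm i hi') (hjn i hi').symm)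
        (by -- hK1
          intro i hi j hj
          by_cases hin : i = n <;> by_cases hjn2 : j = n
          · rw [hin, hjn2]; simp
          · have hj' : j < n := by omega
            rw [hin, hTn, hTj j hj', hPn, hPj j hj', dist_comm (w n) (x j)]
            have e1 := (est j hj').1
            have e2 := hsep n hnm j (hjm j hj') (hjn j hj').symm
            have e3 := hρpos j (hjm j hj')
            rw [abs_le]
            constructor
            · linarith
            · linarith [hβ, dist_nonneg (x := x j) (y := w n)]
          · have hi' : i < n := by omega
            rw [hjn2, hTn, hTj i hi', hPn, hPj i hi']
            have e1 := (est i hi').1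
            have e2 := hsep n hnm i (hjm i hi') (hjn i hi').symm
            have e3 := hρpos i (hjm i hi')
            rw [abs_le]
            constructor
            · linarith [hβ, dist_nonneg (x := x i) (y := w n)]
            · linarith
          · have hi' : i < n := by omega
            have hj' : j < n := by omega
            rw [hTj i hi', hTj j hj', hPj i hi', hPj j hj', hx1 i hi' j hj']
            have h5 := abs_dist_sub_le (z i) (z j) (z n)
            rw [dist_comm (z i) (z n), dist_comm (z j) (z n)] at h5
            exact h5)
        (by -- hK2
          intro i hi j hj
          by_cases hin : i = n <;> by_cases hjn2 : j = n
          · rw [hin, hjn2, hTn, hPn, dist_self]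
            have := hρpos n hnm; linarith
          · have hj' : j < n := by omega
            rw [hin, hTn, hTj j hj', hPn, hPj j hj', dist_comm (w n) (x j)]
            linarith [(est j hj').2]
          · have hi' : i < n := by omega
            rw [hjn2, hTn, hTj i hi', hPn, hPj i hi']
            linarith [(est i hi').2]
          · have hi' : i < n := by omega
            have hj' : j < n := by omega
            rw [hTj i hi', hTj j hj', hPj i hi', hPj j hj', hx1 i hi' j hj']
            have h5 := dist_triangle (z i) (z n) (z j)
            rw [dist_comm (z i) (z n)] at h5
            linarith)
      refine ⟨Function.update x n q, ?_, ?_⟩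
      · intro i hi j hj
        by_cases hin : i = n <;> by_cases hjn2 : j = n
        · rw [hin, hjn2]; simp
        · have hj' : j < n := by omega
          rw [hin, Function.update_self, Function.update_of_ne (hjn j hj')]
          have h6 := hq j (lt_trans hj' (Nat.lt_succ_self n))
          rw [hPj j hj', hTj j hj'] at h6
          exact h6
        · have hi' : i < n := by omega
          rw [hjn2, Function.update_self, Function.update_of_ne (hjn i hi')]
          have h6 := hq i (lt_trans hi' (Nat.lt_succ_self n))
          rw [hPj i hi', hTj i hi'] at h6
          rw [dist_comm (x i) q, h6, dist_comm]
        · have hi' : i < n := by omega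
          have hj' : j < n := by omega
          rw [Function.update_of_ne (hjn i hi'), Function.update_of_ne (hjn j hj')]
          exact hx1 i hi' j hj'
      · intro i hi
        by_cases hin : i = n
        · rw [hin, Function.update_self]
          have h6 := hq n (Nat.lt_succ_self n)
          rwa [hPn, hTn] at h6
        · have hi' : i < n := by omega
          rw [Function.update_of_ne (hjn i hi')]
          exact hx2 i hi'


local notation "X" => UniformSpace.Completion M

lemma approxX (x : X) (θ : ℝ) (hθ : 0 < θ) : ∃ u : M, dist x (↑u : X) ≤ θ := by
  obtain ⟨u, hu⟩ := Metric.denseRange_iff.mp UniformSpace.Completion.denseRange_coe x θ hθ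
  exact ⟨u, le_of_lt hu⟩

lemma cdist (u v : M) : dist ((↑u : X)) ((↑v : X)) = dist u v :=
  UniformSpace.Completion.dist_eq u v

/-- Approximate the configuration `a` inside `M` by an exact copy `x` of an
approximation `za`, with `x i` close to `c i`. -/
lemma approx_config (hhom : IsHomogeneous M)
    (hemb : ∀ (F : Type) [MetricSpace F] [Finite F], distSet F ⊆ distSet M →
      ∃ f : F → M, ∀ a b : F, dist (f a) (f b) = dist a b)
    [Nonempty M] (hz : ZeroLimit (distSet M))
    (m : ℕ) (a c : ℕ → X) (μ : ℝ) (hμ : 0 < μ)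
    (hμle : ∀ i < m, ∀ j < m, i ≠ j → μ ≤ dist (a i) (a j))
    (hiso : ∀ i < m, ∀ j < m, dist (a i) (a j) = dist (c i) (c j))
    (δ : ℝ) (hδ : 0 < δ) (hδμ : δ ≤ μ / 8) :
    ∃ (za x : ℕ → M) (θ : ℝ),
      0 < θ ∧ 4 * θ ≤ δ ∧
      (∀ i < m, dist (a i) ((↑(za i) : X)) ≤ θ) ∧
      (∀ i < m, ∀ j < m, dist (x i) (x j) = dist (za i) (za j)) ∧
      (∀ i < m, dist ((↑(x i) : X)) (c i) ≤ δ) := by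
  obtain ⟨ρ, hρ1, hρ2, hρ3⟩ := zl_pick hz m (δ / 2) (by linarith)
  -- monotonicity of ρ below m
  have hmono : ∀ i, i < m → ∀ j, j ≤ i → ρ j ≤ ρ i := by
    intro i
    induction i with
    | zero => intro _ j hj; interval_cases j; exact le_rfl
    | succ i ih =>
        intro hi j hj
        rcases Nat.eq_or_lt_of_le hj with rfl | hj'
        · exact le_rfl
        · have h1 : ρ j ≤ ρ i := ih (by omega) j (by omega)
          have h2 := hρ3 i (by omega)
          have := (hρ1 i).1
          linarith
  set θ := ρ 0 / 8 with hθdef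
  have hθpos : 0 < θ := by have := (hρ1 0).1; positivity
  have hθδ : 4 * θ ≤ δ := by have := (hρ1 0).2; simp only [hθdef]; linarith
  -- approximations
  choose za hza using fun i => approxX (a i) θ hθpos
  choose zc hzc using fun i => approxX (c i) θ hθpos
  have key : ∀ (u : ℕ → X) (v : ℕ → M), (∀ i, dist (u i) (↑(v i) : X) ≤ θ) →
      ∀ i j, |dist (v i) (v j) - dist (u i) (u j)| ≤ 2 * θ := by
    intro u v hv i j
    rw [← cdist]
    have h1 : |dist ((↑(v i) : X)) ((↑(v j) : X)) - dist (u i) ((↑(v j) : X))| ≤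
        dist ((↑(v i) : X)) (u i) := abs_dist_sub_le _ _ _
    have h2 : |dist (u i) ((↑(v j) : X)) - dist (u i) (u j)| ≤
        dist ((↑(v j)) : X) (u j) := by
      rw [dist_comm (u i) ((↑(v j)) : X), dist_comm (u i) (u j)]
      exact abs_dist_sub_le _ _ _
    have h3 := hv i; have h4 := hv j
    rw [dist_comm] at h3 h4
    have := abs_sub_le (dist ((↑(v i) : X)) ((↑(v j) : X))) (dist (u i) ((↑(v j) : X)))
      (dist (u i) (u j))
    have h1a := abs_le.mp h1; have h2a := abs_le.mp h2
    have h3' : dist (u i) ((↑(v i)) : X) ≤ θ := by rw [dist_comm]; exact h3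
    have h4' : dist (u j) ((↑(v j)) : X) ≤ θ := by rw [dist_comm]; exact h4
    rw [abs_le]
    constructor <;> [linarith [h1a.1, h2a.1, h3, h4, h3', h4']; linarith [h1a.2, h2a.2, h3, h4, h3', h4']]
  have hsepa : ∀ i < m, ∀ j < m, i ≠ j → μ - 2 * θ ≤ dist (za i) (za j) := by
    intro i hi j hj hij
    have := (abs_le.mp (key a za hza i j)).1
    have := hμle i hi j hj hij
    linarith
  -- apply xc with z := za, w := zc, β := 4 θ
  obtain ⟨x, hx1, hx2⟩ := xc hhom hemb m za zc ρ (4 * θ) (by linarith)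
    (fun i hi => hρ2 i hi) (fun i _ => (hρ1 i).1)
    (by -- hgap
      intro j i hj hi
      have h1 : ρ j + ρ 0 ≤ ρ i := by
        have h2 := hρ3 j (by omega)
        have h3 : ρ (j+1) ≤ ρ i := hmono i hi (j+1) (by omega)
        have h4 : ρ 0 ≤ ρ j := hmono j (by omega) 0 (by omega)
        linarith
      have : (4:ℝ) * θ ≤ ρ 0 := by rw [hθdef]; linarith [(hρ1 0).1]
      linarith)
    (by -- happ
      intro i hi j hj hij
      have k1 := key a za hza i j
      have k2 := key c zc hzc i j
      have k3 := hiso i hi j hj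
      have k1a := abs_le.mp k1; have k2a := abs_le.mp k2
      rw [abs_le]
      constructor <;> [linarith [k1a.1, k2a.2]; linarith [k1a.2, k2a.1]])
    (by -- hsep
      intro i hi j hj hij
      have h1 := hsepa i hi j hj hij
      have h2 : ρ i < δ / 2 := (hρ1 i).2
      have h3 : ρ j < δ / 2 := (hρ1 j).2
      have h4 : (4:ℝ) * θ ≤ δ := hθδ
      have h5 : δ ≤ μ / 8 := hδμ
      have h6 : 2 * θ ≤ δ / 2 := by linarith
      linarith)
  refine ⟨za, x, θ, hθpos, hθδ, fun i _ => hza i, hx1, ?_⟩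
  intro i hi
  have h1 : dist ((↑(x i) : X)) ((↑(zc i) : X)) = ρ i := by rw [cdist]; exact hx2 i hi
  have h2 := hzc i
  have h3 := dist_triangle ((↑(x i) : X)) ((↑(zc i) : X)) (c i)
  rw [dist_comm (c i) _] at h2
  have h4 : ρ i < δ / 2 := (hρ1 i).2
  have h5 : θ ≤ δ / 2 := by linarith
  linarith



lemma abs_dist_sub_le' {α : Type*} [PseudoMetricSpace α] (c a b : α) :
    |dist c a - dist c b| ≤ dist a b := by
  rw [dist_comm c a, dist_comm c b]; exact abs_dist_sub_le a b c

lemma approx_dist (u u' : X) (v v' : M) (θ : ℝ)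
    (h1 : dist u ((↑v : X)) ≤ θ) (h2 : dist u' ((↑v' : X)) ≤ θ) :
    |dist v v' - dist u u'| ≤ 2 * θ := by
  rw [← cdist]
  have e1 : |dist ((↑v : X)) ((↑v' : X)) - dist ((↑v : X)) u'| ≤ dist ((↑v' : X)) u' :=
    abs_dist_sub_le' _ _ _
  have e2 : |dist ((↑v : X)) u' - dist u u'| ≤ dist ((↑v : X)) u := abs_dist_sub_le _ _ _
  have e1a := abs_le.mp e1; have e2a := abs_le.mp e2
  rw [dist_comm ((↑v' : X)) u'] at e1a
  rw [dist_comm ((↑v : X)) u] at e2a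
  rw [abs_le]
  constructor
  · linarith [e1a.1, e2a.1, h1, h2]
  · linarith [e1a.2, e2a.2, h1, h2]

set_option maxHeartbeats 1000000 in
theorem star_core (hhom : IsHomogeneous M)
    (hemb : ∀ (F : Type) [MetricSpace F] [Finite F], distSet F ⊆ distSet M →
      ∃ f : F → M, ∀ a b : F, dist (f a) (f b) = dist a b)
    [Nonempty M] (hz : ZeroLimit (distSet M))
    (m : ℕ) (a c : ℕ → X) (b : X)
    (hiso : ∀ i < m, ∀ j < m, dist (a i) (a j) = dist (c i) (c j))
    (hane : ∀ i < m, ∀ j < m, i ≠ j → 0 < dist (a i) (a j))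
    (hb : ∀ i < m, 0 < dist b (a i)) :
    ∃ q : X, ∀ i < m, dist q (c i) = dist b (a i) := by
  classical
  rcases Nat.eq_zero_or_pos m with rfl | hm
  · exact ⟨b, fun i hi => absurd hi (Nat.not_lt_zero _)⟩
  have hrm : (Finset.range m).Nonempty := Finset.nonempty_range_iff.mpr (by omega)
  -- minimum of dist b (a i)
  set vmin : ℝ := (Finset.range m).inf' hrm (fun i => dist b (a i)) with hvmin
  have hvminpos : 0 < vmin := by
    rw [hvmin, Finset.lt_inf'_iff]
    intro i hi
    exact hb i (Finset.mem_range.mp hi)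
  have hvminle : ∀ i < m, vmin ≤ dist b (a i) := fun i hi =>
    Finset.inf'_le _ (Finset.mem_range.mpr hi)
  -- minimum pairwise distance
  set PD : Finset ℝ := insert 1 (((Finset.range m ×ˢ Finset.range m).filter
      (fun p => p.1 ≠ p.2)).image (fun p => dist (a p.1) (a p.2))) with hPD
  have hPDne : PD.Nonempty := ⟨1, Finset.mem_insert_self _ _⟩
  set μ : ℝ := PD.min' hPDne with hμdef
  have hμpos : 0 < μ := by
    rw [hμdef, Finset.lt_min'_iff]
    intro y hy
    rw [hPD] at hy
    rcases Finset.mem_insert.mp hy with rfl | hy'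
    · norm_num
    · obtain ⟨p, hp, rfl⟩ := Finset.mem_image.mp hy'
      have hp' := Finset.mem_filter.mp hp
      have h1 := Finset.mem_product.mp hp'.1
      exact hane p.1 (Finset.mem_range.mp h1.1) p.2 (Finset.mem_range.mp h1.2) hp'.2
  have hμle : ∀ i < m, ∀ j < m, i ≠ j → μ ≤ dist (a i) (a j) := by
    intro i hi j hj hij
    apply Finset.min'_le
    rw [hPD]
    refine Finset.mem_insert_of_mem (Finset.mem_image.mpr ⟨(i, j), ?_, rfl⟩)
    rw [Finset.mem_filter]
    exact ⟨Finset.mem_product.mpr ⟨Finset.mem_range.mpr hi, Finset.mem_range.mpr hj⟩, hij⟩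
  -- the invariant
  set Inv : ℝ → X → Prop := fun ε q => ε ∈ distSet M ∧ 0 < ε ∧ 4 * ε ≤ vmin ∧
    ∀ i < m, |dist q (c i) - dist b (a i)| ≤ ε / 2 with hInv
  -- shared construction
  have build : ∀ δ : ℝ, 0 < δ → δ ≤ μ / 8 →
      ∃ (za x : ℕ → M) (θ : ℝ) (zb : M),
        0 < θ ∧ 4 * θ ≤ δ ∧
        (∀ i < m, dist (a i) ((↑(za i) : X)) ≤ θ) ∧
        (∀ i < m, ∀ j < m, dist (x i) (x j) = dist (za i) (za j)) ∧
        (∀ i < m, dist ((↑(x i) : X)) (c i) ≤ δ) ∧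
        dist b ((↑zb : X)) ≤ θ ∧
        (∀ i < m, |dist zb (za i) - dist b (a i)| ≤ 2 * θ) ∧
        (∀ i < m, ∀ j < m, i ≠ j → μ - 2 * θ ≤ dist (x i) (x j)) := by
    intro δ hδ hδμ
    obtain ⟨za, x, θ, hθ, hθδ, hza, hx1, hx2⟩ :=
      approx_config hhom hemb hz m a c μ hμpos hμle hiso δ hδ hδμ
    obtain ⟨zb, hzb⟩ := approxX b θ hθ
    refine ⟨za, x, θ, zb, hθ, hθδ, hza, hx1, hx2, hzb, ?_, ?_⟩
    · intro i hi
      exact approx_dist b (a i) zb (za i) θ hzb (hza i hi)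
    · intro i hi j hj hij
      rw [hx1 i hi j hj]
      have := abs_le.mp (approx_dist (a i) (a j) (za i) (za j) θ (hza i hi) (hza j hj))
      have := hμle i hi j hj hij
      linarith [this]
  -- base point
  obtain ⟨ε₀, hε₀R, hε₀pos, hε₀lt⟩ := hz (vmin / 4) (by linarith)
  have hbase : ∃ q₀ : X, Inv ε₀ q₀ := by
    set δ : ℝ := min (ε₀ / 6) (μ / 8) with hδdef
    have hδpos : 0 < δ := lt_min (by linarith) (by linarith)
    have hδμ : δ ≤ μ / 8 := min_le_right _ _
    have hδε : δ ≤ ε₀ / 6 := min_le_left _ _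
    obtain ⟨za, x, θ, zb, hθ, hθδ, hza, hx1, hx2, hzb, hzbd, hxd⟩ := build δ hδpos hδμ
    obtain ⟨q, hq⟩ := realize hhom hemb m x (fun i => dist zb (za i))
      (by
        intro i hi j hj hij
        have := hxd i hi j hj hij
        intro hcon
        rw [hcon, dist_self] at this
        have h8 : δ ≤ μ / 8 := hδμ
        linarith
        )
      (fun i _ => dist_mem_distSet _ _)
      (by
        intro i hi
        have h1 := abs_le.mp (hzbd i hi)
        have h2 := hvminle i hi
        have : 2 * θ ≤ δ / 2 := by linarith
        have : δ ≤ vmin := by linarith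
        linarith [h1.1]
        )
      (by
        intro i hi j hj
        rw [hx1 i hi j hj]
        exact abs_dist_sub_le' zb (za i) (za j))
      (by
        intro i hi j hj
        rw [hx1 i hi j hj]
        have := dist_triangle (za i) zb (za j)
        rw [dist_comm (za i) zb] at this
        linarith)
    refine ⟨(↑q : X), hε₀R, hε₀pos, by linarith, ?_⟩
    intro i hi
    have h1 : dist ((↑q : X)) ((↑(x i) : X)) = dist zb (za i) := by rw [cdist]; exact hq i hi
    have h2 : |dist ((↑q : X)) (c i) - dist ((↑q : X)) ((↑(x i) : X))| ≤
        dist ((↑(x i) : X)) (c i) := by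
      rw [dist_comm ((↑(x i) : X)) (c i)]
      exact abs_dist_sub_le' _ _ _
    have h3 := hx2 i hi
    have h4 := abs_le.mp (hzbd i hi)
    have h2a := abs_le.mp h2
    rw [h1] at h2a
    rw [abs_le]
    constructor
    · linarith [h2a.1, h4.1]
    · linarith [h2a.2, h4.2]
  -- the improvement step
  have hstep : ∀ (ε : ℝ) (q : X), Inv ε q →
      ∃ (ε' : ℝ) (q' : X), Inv ε' q' ∧ ε' ≤ ε / 4 ∧ dist q' q ≤ 2 * ε := by
    intro ε q hq
    obtain ⟨hεR, hεpos, hεvmin, herr⟩ := hq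
    obtain ⟨ε', hε'R, hε'pos, hε'lt⟩ := hz (ε / 4) (by linarith)
    set δ : ℝ := min (ε' / 6) (μ / 8) with hδdef
    have hδpos : 0 < δ := lt_min (by linarith) (by linarith)
    have hδμ : δ ≤ μ / 8 := min_le_right _ _
    have hδε : δ ≤ ε' / 6 := min_le_left _ _
    obtain ⟨za, x, θ, zb, hθ, hθδ, hza, hx1, hx2, hzb, hzbd, hxd⟩ := build δ hδpos hδμ
    obtain ⟨zq, hzq⟩ := approxX q θ hθ
    -- distance estimates between x i and zq
    have hxq : ∀ i < m, |dist (x i) zq - dist b (a i)| ≤ ε / 2 + θ + δ := by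
      intro i hi
      have e1 : |dist ((↑(x i) : X)) ((↑zq : X)) - dist ((↑(x i) : X)) q| ≤
          dist q ((↑zq : X)) := by
        rw [dist_comm q ((↑zq : X))]
        exact abs_dist_sub_le' _ _ _
      have e2 : |dist ((↑(x i) : X)) q - dist (c i) q| ≤ dist ((↑(x i) : X)) (c i) :=
        abs_dist_sub_le _ _ _
      have e3 := herr i hi
      have e4 := hx2 i hi
      have e1a := abs_le.mp e1; have e2a := abs_le.mp e2; have e3a := abs_le.mp e3
      rw [← cdist (x i) zq, abs_le]
      rw [dist_comm (c i) q] at e2a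
      constructor
      · linarith [e1a.1, e2a.1, e3a.1, hzq]
      · linarith [e1a.2, e2a.2, e3a.2, hzq]
    set P : ℕ → M := fun j => if j = m then zq else x j with hP
    set T : ℕ → ℝ := fun j => if j = m then ε else dist zb (za j) with hT
    have hPm : P m = zq := if_pos rfl
    have hTm : T m = ε := if_pos rfl
    have hPj : ∀ j < m, P j = x j := fun j hj => if_neg (Nat.ne_of_lt hj)
    have hTj : ∀ j < m, T j = dist zb (za j) := fun j hj => if_neg (Nat.ne_of_lt hj)
    have hbig : 3 * θ + δ ≤ ε / 2 := by
      have : 4 * ε' ≤ ε := by linarith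
      linarith
    have hxqpos : ∀ i < m, 0 < dist (x i) zq := by
      intro i hi
      have h1 := (abs_le.mp (hxq i hi)).1
      have h2 := hvminle i hi
      linarith
    obtain ⟨q'', hq''⟩ := realize hhom hemb (m+1) P T
      (by
        intro i hi j hj hij
        by_cases him : i = m <;> by_cases hjm : j = m
        · rw [him, hjm] at hij; exact absurd rfl hij
        · have hj' : j < m := by omega
          rw [him, hPm, hPj j hj']
          intro hcon
          have := hxqpos j hj'
          rw [← hcon, dist_self] at this
          linarith
        · have hi' : i < m := by omega
          rw [hjm, hPm, hPj i hi']
          intro hcon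
          have := hxqpos i hi'
          rw [hcon, dist_self] at this
          linarith
        · have hi' : i < m := by omega
          have hj' : j < m := by omega
          rw [hPj i hi', hPj j hj']
          intro hcon
          have := hxd i hi' j hj' hij
          rw [hcon, dist_self] at this
          linarith)
      (by
        intro i hi
        by_cases him : i = m
        · rw [him, hTm]; exact hεR
        · have hi' : i < m := by omega
          rw [hTj i hi']; exact dist_mem_distSet _ _)
      (by
        intro i hi
        by_cases him : i = m
        · rw [him, hTm]; exact hεpos
        · have hi' : i < m := by omega
          rw [hTj i hi']
          have h1 := (abs_le.mp (hzbd i hi')).1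
          have h2 := hvminle i hi'
          linarith)
      (by
        intro i hi j hj
        by_cases him : i = m <;> by_cases hjm : j = m
        · rw [him, hjm]; simp
        · have hj' : j < m := by omega
          rw [him, hTm, hTj j hj', hPm, hPj j hj', dist_comm zq (x j)]
          have h1 := abs_le.mp (hxq j hj')
          have h2 := abs_le.mp (hzbd j hj')
          have h3 := hvminle j hj'
          rw [abs_le]
          constructor
          · linarith [h1.1, h2.2]
          · linarith [h1.1, h2.1]
        · have hi' : i < m := by omega
          rw [hjm, hTm, hTj i hi', hPm, hPj i hi']
          have h1 := abs_le.mp (hxq i hi')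
          have h2 := abs_le.mp (hzbd i hi')
          have h3 := hvminle i hi'
          rw [abs_le]
          constructor
          · linarith [h1.1, h2.1]
          · linarith [h1.1, h2.2]
        · have hi' : i < m := by omega
          have hj' : j < m := by omega
          rw [hTj i hi', hTj j hj', hPj i hi', hPj j hj', hx1 i hi' j hj']
          exact abs_dist_sub_le' zb (za i) (za j))
      (by
        intro i hi j hj
        by_cases him : i = m <;> by_cases hjm : j = m
        · rw [him, hjm, hTm, hPm, dist_self]; linarith
        · have hj' : j < m := by omega
          rw [him, hTm, hTj j hj', hPm, hPj j hj', dist_comm zq (x j)]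
          have h1 := abs_le.mp (hxq j hj')
          have h2 := abs_le.mp (hzbd j hj')
          linarith [h1.2, h2.1]
        · have hi' : i < m := by omega
          rw [hjm, hTm, hTj i hi', hPm, hPj i hi']
          have h1 := abs_le.mp (hxq i hi')
          have h2 := abs_le.mp (hzbd i hi')
          linarith [h1.2, h2.1]
        · have hi' : i < m := by omega
          have hj' : j < m := by omega
          rw [hTj i hi', hTj j hj', hPj i hi', hPj j hj', hx1 i hi' j hj']
          have := dist_triangle (za i) zb (za j)
          rw [dist_comm (za i) zb] at this
          linarith)
    refine ⟨ε', (↑q'' : X), ⟨hε'R, hε'pos, by linarith, ?_⟩, by linarith, ?_⟩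
    · intro i hi
      have h1 : dist ((↑q'' : X)) ((↑(x i) : X)) = dist zb (za i) := by
        rw [cdist]
        have := hq'' i (by omega)
        rwa [hPj i hi, hTj i hi] at this
      have h2 : |dist ((↑q'' : X)) (c i) - dist ((↑q'' : X)) ((↑(x i) : X))| ≤
          dist ((↑(x i) : X)) (c i) := by
        rw [dist_comm ((↑(x i) : X)) (c i)]
        exact abs_dist_sub_le' _ _ _
      have h3 := hx2 i hi
      have h4 := abs_le.mp (hzbd i hi)
      have h2a := abs_le.mp h2
      rw [h1] at h2a
      rw [abs_le]
      constructor
      · linarith [h2a.1, h4.1]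
      · linarith [h2a.2, h4.2]
    · have h1 : dist ((↑q'' : X)) ((↑zq : X)) = ε := by
        rw [cdist]
        have := hq'' m (by omega)
        rwa [hPm, hTm] at this
      have h2 := dist_triangle ((↑q'' : X)) ((↑zq : X)) q
      rw [dist_comm ((↑zq : X)) q] at h2
      linarith [hzq, h1, h2]
  -- iterate the step
  obtain ⟨q₀, hq₀⟩ := hbase
  set T' := {p : ℝ × X // Inv p.1 p.2} with hT'
  have step' : ∀ s : T', ∃ s' : T', s'.1.1 ≤ s.1.1 / 4 ∧ dist s'.1.2 s.1.2 ≤ 2 * s.1.1 := by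
    rintro ⟨⟨ε, qq⟩, hinv⟩
    obtain ⟨ε', q', h1, h2, h3⟩ := hstep ε qq hinv
    exact ⟨⟨(ε', q'), h1⟩, h2, h3⟩
  set FF : T' → T' := fun s => Classical.choose (step' s) with hFF
  have hFs : ∀ s, (FF s).1.1 ≤ s.1.1 / 4 ∧ dist (FF s).1.2 s.1.2 ≤ 2 * s.1.1 :=
    fun s => Classical.choose_spec (step' s)
  set s0 : T' := ⟨(ε₀, q₀), hq₀⟩ with hs0
  set sq : ℕ → T' := fun n => FF^[n] s0 with hsq
  have hsqs : ∀ n, sq (n+1) = FF (sq n) := fun n => Function.iterate_succ_apply' FF n s0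
  set E : ℕ → ℝ := fun n => (sq n).1.1 with hE
  set Q : ℕ → X := fun n => (sq n).1.2 with hQ
  have hE0 : E 0 = ε₀ := by simp [hE, hsq, hs0]
  have hEstep : ∀ n, E (n+1) ≤ E n / 4 ∧ dist (Q (n+1)) (Q n) ≤ 2 * E n := by
    intro n
    have := hFs (sq n)
    rw [← hsqs n] at this
    exact this
  have hEpos : ∀ n, 0 < E n := fun n => (sq n).2.2.1
  have hEgeo : ∀ n, E n ≤ ε₀ * (1/4)^n := by
    intro n
    induction n with
    | zero => simp [hE0]
    | succ n ih =>
        have h1 := (hEstep n).1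
        have : ε₀ * (1/4)^(n+1) = (ε₀ * (1/4)^n) / 4 := by ring
        rw [this]
        linarith
  have hcauchy : CauchySeq Q := by
    apply cauchySeq_of_le_geometric (1/4 : ℝ) (2 * ε₀) (by norm_num)
    intro n
    rw [dist_comm]
    have h1 := (hEstep n).2
    have h2 := hEgeo n
    calc dist (Q (n+1)) (Q n) ≤ 2 * E n := h1
      _ ≤ 2 * ε₀ * (1/4)^n := by linarith [hEgeo n]
  obtain ⟨q, hqlim⟩ := cauchySeq_tendsto_of_complete hcauchy
  refine ⟨q, fun i hi => ?_⟩
  have hElim : Filter.Tendsto E Filter.atTop (nhds 0) := by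
    apply squeeze_zero (fun n => le_of_lt (hEpos n)) hEgeo
    have := tendsto_pow_atTop_nhds_zero_of_lt_one (by norm_num : (0:ℝ) ≤ 1/4) (by norm_num)
    simpa using this.const_mul ε₀
  have h1 : Filter.Tendsto (fun n => dist (Q n) (c i)) Filter.atTop
      (nhds (dist q (c i))) := hqlim.dist tendsto_const_nhds
  have h2 : Filter.Tendsto (fun n => dist (Q n) (c i)) Filter.atTop
      (nhds (dist b (a i))) := by
    have herr : ∀ n, |dist (Q n) (c i) - dist b (a i)| ≤ E n / 2 :=
      fun n => (sq n).2.2.2.2 i hi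
    have hlow : ∀ n, dist b (a i) - E n / 2 ≤ dist (Q n) (c i) :=
      fun n => by linarith [(abs_le.mp (herr n)).1]
    have hhigh : ∀ n, dist (Q n) (c i) ≤ dist b (a i) + E n / 2 :=
      fun n => by linarith [(abs_le.mp (herr n)).2]
    have hl : Filter.Tendsto (fun n => dist b (a i) - E n / 2) Filter.atTop
        (nhds (dist b (a i))) := by
      have := (hElim.div_const 2).const_sub (dist b (a i))
      simpa using this
    have hh : Filter.Tendsto (fun n => dist b (a i) + E n / 2) Filter.atTop
        (nhds (dist b (a i))) := by
      have := (hElim.div_const 2).const_add (dist b (a i))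
      simpa using this
    exact tendsto_of_tendsto_of_tendsto_of_le_of_le hl hh hlow hhigh
  exact tendsto_nhds_unique h1 h2


theorem star (hhom : IsHomogeneous M)
    (hemb : ∀ (F : Type) [MetricSpace F] [Finite F], distSet F ⊆ distSet M →
      ∃ f : F → M, ∀ a b : F, dist (f a) (f b) = dist a b)
    [Nonempty M] (hz : ZeroLimit (distSet M))
    (k : ℕ) (u v : ℕ → X)
    (h : ∀ i < k, ∀ j < k, dist (u i) (u j) = dist (v i) (v j)) (b : X) :
    ∃ q : X, ∀ i < k, dist q (v i) = dist b (u i) := by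
  classical
  by_cases hbu : ∃ i, i < k ∧ b = u i
  · obtain ⟨i, hi, rfl⟩ := hbu
    exact ⟨v i, fun j hj => (h i hi j hj).symm ▸ (h i hi j hj)⟩
  · push_neg at hbu
    have hbfresh : ∀ i < k, 0 < dist b (u i) := by
      intro i hi
      exact dist_pos.mpr (hbu i hi)
    set T : Finset (UniformSpace.Completion M) := (Finset.range k).image u with hTdef
    set L := T.toList with hL
    set m := L.length with hm
    haveI : Nonempty (UniformSpace.Completion M) := ⟨(↑(Classical.arbitrary M) : X)⟩
    set d : UniformSpace.Completion M := Classical.arbitrary _ with hd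
    set a : ℕ → UniformSpace.Completion M := fun i => L.getD i d with ha
    have haget : ∀ i, i < m → a i ∈ T := by
      intro i hi
      have : L.getD i d = L[i] := List.getD_eq_getElem L d hi
      rw [ha]; simp only [this]
      rw [← Finset.mem_toList, ← hL]
      exact List.getElem_mem _
    have hanodup : ∀ i < m, ∀ j < m, i ≠ j → a i ≠ a j := by
      intro i hi j hj hij
      have h1 : L.getD i d = L[i] := List.getD_eq_getElem L d hi
      have h2 : L.getD j d = L[j] := List.getD_eq_getElem L d hj
      rw [ha]; simp only [h1, h2]
      have hnd : L.Nodup := by rw [hL]; exact T.nodup_toList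
      intro hcon
      exact hij (List.Nodup.getElem_inj_iff hnd |>.mp hcon)
    have hex : ∀ i, i < m → ∃ j, j < k ∧ u j = a i := by
      intro i hi
      have := haget i hi
      rw [hTdef, Finset.mem_image] at this
      obtain ⟨j, hj, hju⟩ := this
      exact ⟨j, Finset.mem_range.mp hj, hju⟩
    choose jd hjd1 hjd2 using fun (i : {i : ℕ // i < m}) => hex i.1 i.2
    set jdx : ℕ → ℕ := fun i => if hi : i < m then jd ⟨i, hi⟩ else 0 with hjdx
    have hjdx1 : ∀ i, i < m → jdx i < k := by
      intro i hi; rw [hjdx]; simp only [dif_pos hi]; exact hjd1 ⟨i, hi⟩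
    have hjdx2 : ∀ i, (hi : i < m) → u (jdx i) = a i := by
      intro i hi; rw [hjdx]; simp only [dif_pos hi]; exact hjd2 ⟨i, hi⟩
    set c : ℕ → UniformSpace.Completion M := fun i => v (jdx i) with hc
    obtain ⟨q, hq⟩ := star_core hhom hemb hz m a c b
      (by
        intro i hi j hj
        rw [← hjdx2 i hi, ← hjdx2 j hj, hc]
        exact h (jdx i) (hjdx1 i hi) (jdx j) (hjdx1 j hj))
      (by
        intro i hi j hj hij
        exact dist_pos.mpr (hanodup i hi j hj hij))
      (by
        intro i hi
        rw [← hjdx2 i hi]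
        exact hbfresh (jdx i) (hjdx1 i hi))
    refine ⟨q, fun j hj => ?_⟩
    have humem : u j ∈ T := by
      rw [hTdef, Finset.mem_image]
      exact ⟨j, Finset.mem_range.mpr hj, rfl⟩
    have : u j ∈ L := by rw [hL, Finset.mem_toList]; exact humem
    obtain ⟨idx, hidx, hidx2⟩ := List.getElem_of_mem this
    have hidxm : idx < m := hidx
    have haidx : a idx = u j := by
      rw [ha]
      have : L.getD idx d = L[idx] := List.getD_eq_getElem L d hidx
      simp only [this, hidx2]
    have hvc : v j = c idx := by
      have h0 : dist (u j) (u (jdx idx)) = dist (v j) (v (jdx idx)) :=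
        h j hj (jdx idx) (hjdx1 idx hidxm)
      have h1 : u (jdx idx) = a idx := hjdx2 idx hidxm
      rw [h1, haidx, dist_self] at h0
      have := eq_of_dist_eq_zero h0.symm
      rw [hc]; exact this
    rw [hvc, ← haidx]
    exact hq idx hidxm


set_option maxHeartbeats 1000000 in
theorem main_zl (hhom : IsHomogeneous M)
    (hemb : ∀ (F : Type) [MetricSpace F] [Finite F], distSet F ⊆ distSet M →
      ∃ f : F → M, ∀ a b : F, dist (f a) (f b) = dist a b)
    [Nonempty M] [TopologicalSpace.SeparableSpace M] (hz : ZeroLimit (distSet M)) :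
    IsHomogeneous (UniformSpace.Completion M) := by
  classical
  intro F hF f hf
  haveI : Nonempty (UniformSpace.Completion M) := ⟨(↑(Classical.arbitrary M) : X)⟩
  set d : UniformSpace.Completion M := Classical.arbitrary _ with hd
  -- dense sequence in the completion
  set D : ℕ → UniformSpace.Completion M :=
    fun t => (↑(TopologicalSpace.denseSeq M t) : X) with hD
  have hDdense : DenseRange D := by
    have h1 : DenseRange ((↑) : M → X) := UniformSpace.Completion.denseRange_coe
    have h2 : DenseRange (TopologicalSpace.denseSeq M) :=
      TopologicalSpace.denseRange_denseSeq M
    have := h1.comp h2 (UniformSpace.Completion.continuous_coe M)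
    exact this
  -- enumerate F
  haveI : Finite ↥F := hF.to_subtype
  obtain ⟨N, ⟨e⟩⟩ := Finite.exists_equiv_fin ↥F
  set pair0 : ℕ → UniformSpace.Completion M × UniformSpace.Completion M :=
    fun i => if h : i < N then ((e.symm ⟨i, h⟩ : X), f (e.symm ⟨i, h⟩)) else (d, d)
    with hpair0
  have hpair0F : ∀ x : F, pair0 (e x).val = ((x : X), f x) := by
    intro x
    rw [hpair0]
    have hlt : ((e x).val : ℕ) < N := (e x).2
    simp only [dif_pos hlt]
    have : (⟨(e x).val, hlt⟩ : Fin N) = e x := Fin.eta _ _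
    rw [this, Equiv.symm_apply_apply]
  -- Good predicate
  set Good : ℕ → (ℕ → UniformSpace.Completion M × UniformSpace.Completion M) → Prop :=
    fun n p => ∀ i < n, ∀ j < n, dist (p i).1 (p j).1 = dist (p i).2 (p j).2 with hGood
  have hGood0 : Good N pair0 := by
    intro i hi j hj
    rw [hpair0]
    simp only [dif_pos hi, dif_pos hj]
    exact (hf (e.symm ⟨i, hi⟩) (e.symm ⟨j, hj⟩)).symm
  -- the type of stages
  set Wty : ℕ → Type := fun n =>
    {p : ℕ → UniformSpace.Completion M × UniformSpace.Completion M //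
      Good (N + n) p ∧ (∀ i < N, p i = pair0 i) ∧
      (∀ t, N + 2*t < N + n → (p (N + 2*t)).1 = D t) ∧
      (∀ t, N + (2*t+1) < N + n → (p (N + (2*t+1))).2 = D t)} with hWty
  have W0 : Wty 0 := by
    refine ⟨pair0, ?_, fun i _ => rfl, fun t ht => absurd ht (by omega), fun t ht => absurd ht (by omega)⟩
    simpa using hGood0
  have hstar1 : ∀ (n : ℕ) (s : Wty n), ∃ q : UniformSpace.Completion M,
      ∀ i < N + n, dist q ((s.val i).2) = dist (D (n/2)) ((s.val i).1) :=
    fun n s => star hhom hemb hz (N + n) (fun i => (s.val i).1) (fun i => (s.val i).2)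
      s.2.1 (D (n/2))
  have hstar2 : ∀ (n : ℕ) (s : Wty n), ∃ q : UniformSpace.Completion M,
      ∀ i < N + n, dist q ((s.val i).1) = dist (D (n/2)) ((s.val i).2) :=
    fun n s => star hhom hemb hz (N + n) (fun i => (s.val i).2) (fun i => (s.val i).1)
      (fun i hi j hj => (s.2.1 i hi j hj).symm) (D (n/2))
  set np : ∀ n, Wty n → UniformSpace.Completion M × UniformSpace.Completion M :=
    fun n s => if n % 2 = 0 then (D (n/2), Classical.choose (hstar1 n s))
      else (Classical.choose (hstar2 n s), D (n/2)) with hnp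
  have WstepEx : ∀ n (s : Wty n), ∃ s' : Wty (n+1),
      s'.val = Function.update s.val (N + n) (np n s) := by
    intro n s
    refine ⟨⟨Function.update s.val (N + n) (np n s), ?_, ?_, ?_, ?_⟩, rfl⟩
    · -- Good (N + (n+1))
      have hG := s.2.1
      intro i hi j hj
      by_cases hieq : i = N + n <;> by_cases hjeq : j = N + n
      · rw [hieq, hjeq]; simp
      · have hj' : j < N + n := by omega
        rw [hieq, Function.update_self, Function.update_of_ne (by omega : j ≠ N + n)]
        by_cases hpar : n % 2 = 0
        · have hsp := Classical.choose_spec (hstar1 n s) j hj'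
          simp only [hnp, if_pos hpar]
          exact hsp.symm
        · have hsp := Classical.choose_spec (hstar2 n s) j hj'
          simp only [hnp, if_neg hpar]
          exact hsp
      · have hi' : i < N + n := by omega
        rw [hjeq, Function.update_self, Function.update_of_ne (by omega : i ≠ N + n)]
        by_cases hpar : n % 2 = 0
        · have hsp := Classical.choose_spec (hstar1 n s) i hi'
          simp only [hnp, if_pos hpar]
          rw [dist_comm ((s.val i).1) (D (n/2)), dist_comm ((s.val i).2) _]
          exact hsp.symm
        · have hsp := Classical.choose_spec (hstar2 n s) i hi'
          simp only [hnp, if_neg hpar]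
          rw [dist_comm ((s.val i).1) _, dist_comm ((s.val i).2) (D (n/2))]
          exact hsp
      · rw [Function.update_of_ne (by omega : i ≠ N + n),
          Function.update_of_ne (by omega : j ≠ N + n)]
        exact hG i (by omega) j (by omega)
    · intro i hi
      rw [Function.update_of_ne (by omega : i ≠ N + n)]
      exact s.2.2.1 i hi
    · intro t ht
      have h2 : N + 2*t = N + n ∨ N + 2*t < N + n := by omega
      rcases h2 with heq | hlt
      · rw [heq, Function.update_self, hnp]
        have hpar : n % 2 = 0 := by omega
        simp only [if_pos hpar]
        have : n / 2 = t := by omega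
        rw [this]
      · rw [Function.update_of_ne (by omega : N + 2*t ≠ N + n)]
        exact s.2.2.2.1 t hlt
    · intro t ht
      have h2 : N + (2*t+1) = N + n ∨ N + (2*t+1) < N + n := by omega
      rcases h2 with heq | hlt
      · rw [heq, Function.update_self, hnp]
        have hpar : ¬ (n % 2 = 0) := by omega
        simp only [if_neg hpar]
        have : n / 2 = t := by omega
        rw [this]
      · rw [Function.update_of_ne (by omega : N + (2*t+1) ≠ N + n)]
        exact s.2.2.2.2 t hlt
  set Wstep' : ∀ n, Wty n → Wty (n+1) := fun n s => Classical.choose (WstepEx n s) with hWstep'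
  have hWstep_spec : ∀ n (s : Wty n),
      (Wstep' n s).val = Function.update s.val (N + n) (np n s) :=
    fun n s => Classical.choose_spec (WstepEx n s)
  set W : ∀ n, Wty n := fun n => Nat.rec W0 Wstep' n with hW
  have hWsucc' : ∀ n, W (n+1) = Wstep' n (W n) := by
    intro n; rw [hW]
  have hWsucc : ∀ n, (W (n+1)).val = Function.update (W n).val (N + n) (np n (W n)) := by
    intro n
    rw [hWsucc' n, hWstep_spec]
  have hstab : ∀ n n', n ≤ n' → ∀ i, i < N + n → (W n').val i = (W n).val i := by
    intro n n' hle
    induction n' with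
    | zero =>
        have : n = 0 := by omega
        subst this
        exact fun i _ => rfl
    | succ n' ih =>
        intro i hi
        rcases Nat.eq_or_lt_of_le hle with rfl | hlt
        · rfl
        · have h1 : n ≤ n' := by omega
          rw [hWsucc n', Function.update_of_ne (by omega : i ≠ N + n')]
          exact ih h1 i hi
  set up : ℕ → UniformSpace.Completion M := fun i => ((W (i+1)).val i).1 with hup
  set vp : ℕ → UniformSpace.Completion M := fun i => ((W (i+1)).val i).2 with hvp
  have hWp : ∀ n i, i < N + n → (W n).val i = (up i, vp i) := by
    intro n i hi
    have h1 : i < N + (i+1) := by omega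
    rcases le_or_gt n (i+1) with hle | hlt
    · rw [← hstab n (i+1) hle i hi, hup, hvp]
    · rw [hup, hvp, hstab (i+1) n (by omega) i h1]
  have hG1 : ∀ i j, dist (up i) (up j) = dist (vp i) (vp j) := by
    intro i j
    have hbig : i < N + (i + j + 1) := by omega
    have hbig' : j < N + (i + j + 1) := by omega
    have := (W (i + j + 1)).2.1 i hbig j hbig'
    rw [hWp _ i hbig, hWp _ j hbig'] at this
    exact this
  have hG2 : ∀ i < N, (up i, vp i) = pair0 i := by
    intro i hi
    rw [← hWp (i+1) i (by omega)]
    exact (W (i+1)).2.2.1 i hi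
  have hG3 : ∀ t, up (N + 2*t) = D t := by
    intro t
    have hlt : N + 2*t < N + (2*t+1) := by omega
    have := (W (2*t+1)).2.2.2.1 t hlt
    rw [hWp (2*t+1) (N + 2*t) hlt] at this
    exact this
  have hG4 : ∀ t, vp (N + (2*t+1)) = D t := by
    intro t
    have hlt : N + (2*t+1) < N + (2*t+2) := by omega
    have := (W (2*t+2)).2.2.2.2 t hlt
    rw [hWp (2*t+2) (N + (2*t+1)) hlt] at this
    exact this
  have hupdense : DenseRange up := by
    have hsub : Set.range D ⊆ Set.range up := by
      rintro x ⟨t, rfl⟩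
      exact ⟨N + 2*t, hG3 t⟩
    exact Dense.mono hsub hDdense
  have hvpdense : DenseRange vp := by
    have hsub : Set.range D ⊆ Set.range vp := by
      rintro x ⟨t, rfl⟩
      exact ⟨N + (2*t+1), hG4 t⟩
    exact Dense.mono hsub hDdense
  -- the relation defining the limit isometry
  set Rel : UniformSpace.Completion M → UniformSpace.Completion M → Prop :=
    fun x z => ∀ ε, 0 < ε → ∃ k, dist (up k) x ≤ ε ∧ dist (vp k) z ≤ ε with hRel
  have hRelBase : ∀ k, Rel (up k) (vp k) := by
    intro k ε hε
    exact ⟨k, by simp [le_of_lt hε], by simp [le_of_lt hε]⟩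
  have hRelIso : ∀ x₁ z₁ x₂ z₂, Rel x₁ z₁ → Rel x₂ z₂ →
      dist z₁ z₂ = dist x₁ x₂ := by
    intro x₁ z₁ x₂ z₂ h1 h2
    have key : ∀ ε, 0 < ε → |dist z₁ z₂ - dist x₁ x₂| ≤ 4 * ε := by
      intro ε hε
      obtain ⟨k₁, hk₁u, hk₁v⟩ := h1 ε hε
      obtain ⟨k₂, hk₂u, hk₂v⟩ := h2 ε hε
      have e1 : |dist z₁ z₂ - dist (vp k₁) z₂| ≤ dist z₁ (vp k₁) :=
        abs_dist_sub_le _ _ _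
      have e2 : |dist (vp k₁) z₂ - dist (vp k₁) (vp k₂)| ≤ dist (vp k₂) z₂ := by
        rw [dist_comm (vp k₁) z₂, dist_comm (vp k₁) (vp k₂), dist_comm (vp k₂) z₂]
        exact abs_dist_sub_le _ _ _
      have e3 : |dist x₁ x₂ - dist (up k₁) x₂| ≤ dist x₁ (up k₁) :=
        abs_dist_sub_le _ _ _
      have e4 : |dist (up k₁) x₂ - dist (up k₁) (up k₂)| ≤ dist (up k₂) x₂ := by
        rw [dist_comm (up k₁) x₂, dist_comm (up k₁) (up k₂), dist_comm (up k₂) x₂]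
        exact abs_dist_sub_le _ _ _
      have e5 := hG1 k₁ k₂
      have e1a := abs_le.mp e1; have e2a := abs_le.mp e2
      have e3a := abs_le.mp e3; have e4a := abs_le.mp e4
      have d1 : dist z₁ (vp k₁) ≤ ε := by rw [dist_comm]; exact hk₁v
      have d2 : dist (vp k₂) z₂ ≤ ε := hk₂v
      have d3 : dist x₁ (up k₁) ≤ ε := by rw [dist_comm]; exact hk₁u
      have d4 : dist (up k₂) x₂ ≤ ε := hk₂u
      rw [abs_le]
      constructor
      · linarith [e1a.1, e2a.1, e3a.2, e4a.2]
      · linarith [e1a.2, e2a.2, e3a.1, e4a.1]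
    have habs : |dist z₁ z₂ - dist x₁ x₂| ≤ 0 := by
      by_contra hcon
      push_neg at hcon
      have := key (|dist z₁ z₂ - dist x₁ x₂| / 8) (by linarith)
      linarith
    have := abs_nonneg (dist z₁ z₂ - dist x₁ x₂)
    have : |dist z₁ z₂ - dist x₁ x₂| = 0 := le_antisymm habs this
    have := abs_eq_zero.mp this
    linarith
  have hRelUnique : ∀ x z z', Rel x z → Rel x z' → z = z' := by
    intro x z z' h1 h2
    have := hRelIso x z x z' h1 h2
    rw [dist_self] at this
    exact eq_of_dist_eq_zero this
  -- existence of related points, in both directions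
  have hRelExist : ∀ (α β : ℕ → UniformSpace.Completion M),
      (∀ i j, dist (α i) (α j) = dist (β i) (β j)) → DenseRange α →
      ∀ x, ∃ z, ∀ ε, 0 < ε → ∃ k, dist (α k) x ≤ ε ∧ dist (β k) z ≤ ε := by
    intro α β hαβ hdense x
    have hch : ∀ n : ℕ, ∃ k, dist x (α k) < 1 / (n + 1) := by
      intro n
      exact Metric.denseRange_iff.mp hdense x (1 / (n+1)) (by positivity)
    choose s hs using hch
    have hcauchy : CauchySeq (fun n => β (s n)) := by
      rw [Metric.cauchySeq_iff]
      intro ε hε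
      obtain ⟨Nn, hNn⟩ := exists_nat_gt (2 / ε)
      refine ⟨Nn, fun m' hm' n' hn' => ?_⟩
      have h1 : dist (β (s m')) (β (s n')) = dist (α (s m')) (α (s n')) :=
        (hαβ (s m') (s n')).symm
      have h2 := hs m'
      have h3 := hs n'
      have h4 := dist_triangle (α (s m')) x (α (s n'))
      rw [dist_comm (α (s m')) x] at h4
      have hcast1 : ((Nn:ℝ) + 1) ≤ ((m':ℝ) + 1) := by
        have := (Nat.cast_le (α := ℝ)).mpr hm'; linarith
      have hcast2 : ((Nn:ℝ) + 1) ≤ ((n':ℝ) + 1) := by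
        have := (Nat.cast_le (α := ℝ)).mpr hn'; linarith
      have h5 : (1:ℝ) / ((m':ℝ) + 1) ≤ 1 / ((Nn:ℝ) + 1) :=
        one_div_le_one_div_of_le (by positivity) hcast1
      have h6 : (1:ℝ) / ((n':ℝ) + 1) ≤ 1 / ((Nn:ℝ) + 1) :=
        one_div_le_one_div_of_le (by positivity) hcast2
      have h7 : (2:ℝ) / (Nn + 1) < ε := by
        have hNpos : (0:ℝ) < Nn + 1 := by positivity
        have hεpos : (0:ℝ) < ε := hε
        rw [div_lt_iff₀ hNpos]
        rw [div_lt_iff₀ hεpos] at hNn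
        nlinarith
      calc dist (β (s m')) (β (s n')) = dist (α (s m')) (α (s n')) := h1
        _ ≤ dist x (α (s m')) + dist x (α (s n')) := by
            rw [dist_comm x (α (s m'))] at h4 ⊢; linarith
        _ < 1 / (m' + 1) + 1 / (n' + 1) := by linarith
        _ ≤ 2 / (Nn + 1) := by
            have : (2:ℝ) / (Nn + 1) = 1 / (Nn+1) + 1 / (Nn+1) := by ring
            linarith
        _ < ε := h7
    obtain ⟨z, hz'⟩ := cauchySeq_tendsto_of_complete hcauchy
    refine ⟨z, fun ε hε => ?_⟩
    obtain ⟨N₂, hN₂⟩ := Metric.tendsto_atTop.mp hz' ε hε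
    obtain ⟨Nn, hNn⟩ := exists_nat_gt (1 / ε)
    set n := max N₂ Nn with hndef
    have hn1 : dist (β (s n)) z < ε := hN₂ n (le_max_left _ _)
    have hn2 : Nn ≤ n := le_max_right _ _
    refine ⟨s n, ?_, le_of_lt hn1⟩
    have h9 := hs n
    have h10 : (1:ℝ) / (n + 1) ≤ ε := by
      have hεpos : (0:ℝ) < ε := hε
      rw [div_lt_iff₀ hεpos] at hNn
      have hn3 : (Nn:ℝ) ≤ n := Nat.cast_le.mpr hn2
      have : (0:ℝ) < (n:ℝ) + 1 := by positivity
      rw [div_le_iff₀ this]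
      nlinarith
    rw [dist_comm]
    linarith
  -- the forward and backward maps
  have hEx : ∀ x, ∃ z, Rel x z := hRelExist up vp hG1 hupdense
  have hExRev : ∀ z, ∃ x, Rel x z := by
    intro z
    obtain ⟨x, hx⟩ := hRelExist vp up (fun i j => (hG1 i j).symm) hvpdense z
    exact ⟨x, fun ε hε => by obtain ⟨k, h1, h2⟩ := hx ε hε; exact ⟨k, h2, h1⟩⟩
  set Φ : UniformSpace.Completion M → UniformSpace.Completion M :=
    fun x => Classical.choose (hEx x) with hΦ
  have hΦrel : ∀ x, Rel x (Φ x) := fun x => Classical.choose_spec (hEx x)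
  have hΦiso : ∀ x y, dist (Φ x) (Φ y) = dist x y :=
    fun x y => hRelIso x (Φ x) y (Φ y) (hΦrel x) (hΦrel y)
  have hΦinj : Function.Injective Φ := by
    intro x y hxy
    have : dist (Φ x) (Φ y) = 0 := by rw [hxy, dist_self]
    rw [hΦiso] at this
    exact eq_of_dist_eq_zero this
  have hΦsurj : Function.Surjective Φ := by
    intro z
    obtain ⟨x, hx⟩ := hExRev z
    exact ⟨x, hRelUnique x (Φ x) z (hΦrel x) hx⟩
  have hΦup : ∀ k, Φ (up k) = vp k :=
    fun k => hRelUnique (up k) (Φ (up k)) (vp k) (hΦrel (up k)) (hRelBase k)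
  set gequiv : UniformSpace.Completion M ≃ UniformSpace.Completion M :=
    Equiv.ofBijective Φ ⟨hΦinj, hΦsurj⟩ with hgequiv
  refine ⟨⟨gequiv, Isometry.of_dist_eq hΦiso⟩, ?_⟩
  intro x
  have h1 := hG2 (e x).val (e x).2
  rw [hpair0F x] at h1
  have h2 : up (e x).val = (x : X) := congrArg Prod.fst h1
  have h3 : vp (e x).val = f x := congrArg Prod.snd h1
  have : gequiv (x : X) = Φ (x : X) := rfl
  rw [IsometryEquiv.coe_mk, this, ← h2, hΦup, h3]


/-- The empty case. -/
lemma homog_empty (hM : IsEmpty M) : IsHomogeneous (UniformSpace.Completion M) := by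
  have h1 : Dense (Set.range ((↑) : M → X)) := UniformSpace.Completion.denseRange_coe
  have h2 : Set.range ((↑) : M → X) = (∅ : Set (UniformSpace.Completion M)) :=
    Set.range_eq_empty _
  rw [h2] at h1
  have h3 : (Set.univ : Set (UniformSpace.Completion M)) = ∅ := by
    have := h1.closure_eq
    rw [closure_empty] at this
    exact this.symm
  haveI hXempty : IsEmpty (UniformSpace.Completion M) := Set.univ_eq_empty_iff.mp h3
  intro F hF f hf
  exact ⟨IsometryEquiv.refl _, fun x => isEmptyElim ((x : X))⟩

/-- The uniformly discrete case. -/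
lemma homog_discrete (hhom : IsHomogeneous M) [Nonempty M]
    (hnz : ¬ ZeroLimit (distSet M)) : IsHomogeneous (UniformSpace.Completion M) := by
  rw [ZeroLimit] at hnz
  push_neg at hnz
  obtain ⟨ε₀, hε₀pos, hε₀⟩ := hnz
  have hsep : ∀ u v : M, u ≠ v → ε₀ ≤ dist u v := by
    intro u v huv
    exact hε₀ (dist u v) ⟨u, v, rfl⟩ (dist_pos.mpr huv)
  haveI : CompleteSpace M := by
    apply Metric.complete_of_cauchySeq_tendsto
    intro u hu
    obtain ⟨Nn, hNn⟩ := Metric.cauchySeq_iff.mp hu ε₀ hε₀pos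
    refine ⟨u Nn, tendsto_atTop_of_eventually_const (i₀ := Nn) ?_⟩
    intro i hi
    by_contra hne
    have := hsep (u i) (u Nn) hne
    have := hNn i hi Nn le_rfl
    linarith
  have hiso : Isometry ((↑) : M → X) := UniformSpace.Completion.coe_isometry
  have hinj : Function.Injective ((↑) : M → X) := hiso.injective
  have hsurj : Function.Surjective ((↑) : M → X) := by
    have hcomp : IsComplete (Set.range ((↑) : M → X)) :=
      hiso.isUniformInducing.isComplete_range
    have hclosed := hcomp.isClosed
    have hdense : Dense (Set.range ((↑) : M → X)) := UniformSpace.Completion.denseRange_coe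
    have : Set.range ((↑) : M → X) = Set.univ := by
      rw [← hclosed.closure_eq]
      exact hdense.closure_eq
    intro z
    have : z ∈ Set.range ((↑) : M → X) := this ▸ Set.mem_univ z
    exact this
  set e : M ≃ᵢ UniformSpace.Completion M :=
    ⟨Equiv.ofBijective _ ⟨hinj, hsurj⟩, hiso⟩ with he
  exact homog_transport e hhom

end S5

/-- The metric completion of a homogeneous separable metric space which embeds
every finite metric space with distances in its distance set is homogeneous. -/
theorem statement5 (M : Type) [MetricSpace M] [TopologicalSpace.SeparableSpace M]
    (hhom : IsHomogeneous M)
    (hemb : ∀ (F : Type) [MetricSpace F] [Finite F], distSet F ⊆ distSet M →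
      ∃ f : F → M, ∀ a b : F, dist (f a) (f b) = dist a b) :
    IsHomogeneous (UniformSpace.Completion M) := by
  classical
  by_cases hM : Nonempty M
  · haveI := hM
    by_cases hzl : ZeroLimit (distSet M)
    · exact S5.main_zl hhom hemb hzl
    · exact S5.homog_discrete hhom hzl
  · exact S5.homog_empty (not_nonempty_iff.mp hM)
end

section
/- Let R ⊆ [0,∞) with 0 ∈ R be countable, satisfy the 4-values condition, and have 0 as a limit point. Let U be a countable universal metric space with dist(U) = R and let M be the metric completion of U. Then a finite metric space A = {a_0, …, a_{m−1}} admits an isometric embedding into M if and only if for every ε > 0 there exists a metric space B = {b_0, …, b_{m−1}} with dist(B) ⊆ R such that |d_A(a_i,a_j) − d_B(b_i,b_j)| < ε for all i, j < m. -/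
namespace S6
open Finset

theorem mt_iff {a b c : ℝ} : MetricTriple a b c ↔ a ≤ b + c ∧ b ≤ a + c ∧ c ≤ a + b := by
  unfold MetricTriple
  rw [abs_sub_le_iff]
  exact ⟨fun ⟨⟨u, v⟩, w⟩ => ⟨by linarith, by linarith, w⟩,
    fun ⟨u, v, w⟩ => ⟨⟨by linarith, by linarith⟩, w⟩⟩

theorem mt_symm {a b c : ℝ} (h : MetricTriple a b c) : MetricTriple a c b := by
  rw [mt_iff] at *
  exact ⟨by linarith [h.1, h.2.1, h.2.2], by linarith [h.1, h.2.1, h.2.2],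
    by linarith [h.1, h.2.1, h.2.2]⟩

theorem mt_rot {a b c : ℝ} (h : MetricTriple a b c) : MetricTriple b a c := by
  rw [mt_iff] at *
  exact ⟨h.2.1, h.1, by linarith [h.1, h.2.1, h.2.2]⟩

/-- Two-point 4-values lemma. -/
theorem fourValues_pair {R : Set ℝ} (h4 : FourValues R)
    {e f1 f2 g1 g2 : ℝ} (he : e ∈ R) (hf1 : f1 ∈ R) (hf2 : f2 ∈ R) (hg1 : g1 ∈ R) (hg2 : g2 ∈ R)
    (T1 : MetricTriple e f1 f2) (T2 : MetricTriple e g1 g2) :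
    ∃ y ∈ R, MetricTriple y f1 g1 ∧ MetricTriple y f2 g2 := by
  rcases le_total f1 f2 with h12 | h12 <;> rcases le_total g1 g2 with h34 | h34
  · rcases le_total f2 g2 with h | h
    · -- g2 max
      obtain ⟨y, hy, L⟩ := h4 g2 g1 f1 f2 hg2 hg1 hf1 hf2
        ⟨e, he, mt_symm T2, T1, h34, by linarith, h⟩
      exact ⟨y, hy, L.2.1, mt_symm L.1⟩
    · -- f2 max
      obtain ⟨y, hy, L⟩ := h4 f2 f1 g1 g2 hf2 hf1 hg1 hg2
        ⟨e, he, mt_symm T1, T2, h12, by linarith, by linarith⟩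
      exact ⟨y, hy, mt_symm L.2.1, L.1⟩
  · rcases le_total f2 g1 with h | h
    · -- g1 max
      obtain ⟨y, hy, L⟩ := h4 g1 g2 f2 f1 hg1 hg2 hf2 hf1
        ⟨e, he, T2, mt_symm T1, h34, by linarith, by linarith⟩
      exact ⟨y, hy, mt_symm L.1, L.2.1⟩
    · -- f2 max
      obtain ⟨y, hy, L⟩ := h4 f2 f1 g1 g2 hf2 hf1 hg1 hg2
        ⟨e, he, mt_symm T1, T2, h12, by linarith, by linarith⟩
      exact ⟨y, hy, mt_symm L.2.1, L.1⟩
  · rcases le_total f1 g2 with h | h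
    · -- g2 max
      obtain ⟨y, hy, L⟩ := h4 g2 g1 f1 f2 hg2 hg1 hf1 hf2
        ⟨e, he, mt_symm T2, T1, h34, by linarith, by linarith⟩
      exact ⟨y, hy, L.2.1, mt_symm L.1⟩
    · -- f1 max
      obtain ⟨y, hy, L⟩ := h4 f1 f2 g2 g1 hf1 hf2 hg2 hg1
        ⟨e, he, T1, mt_symm T2, h12, by linarith, by linarith⟩
      exact ⟨y, hy, L.1, mt_symm L.2.1⟩
  · rcases le_total f1 g1 with h | h
    · -- g1 max
      obtain ⟨y, hy, L⟩ := h4 g1 g2 f2 f1 hg1 hg2 hf2 hf1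
        ⟨e, he, T2, mt_symm T1, h34, by linarith, by linarith⟩
      exact ⟨y, hy, mt_symm L.1, L.2.1⟩
    · -- f1 max
      obtain ⟨y, hy, L⟩ := h4 f1 f2 g2 g1 hf1 hf2 hg2 hg1
        ⟨e, he, T1, mt_symm T2, h12, by linarith, by linarith⟩
      exact ⟨y, hy, L.1, mt_symm L.2.1⟩

end S6
namespace S6
open Finset

/-- One-point amalgamation over a nonempty finite base, from the 4-values condition. -/
theorem amalg {R : Set ℝ} (h4 : FourValues R) {T : Type*} (S : Finset T) (hS : S.Nonempty)
    (d : T → T → ℝ) (f g : T → ℝ)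
    (hdR : ∀ x ∈ S, ∀ y ∈ S, d x y ∈ R)
    (hfR : ∀ x ∈ S, f x ∈ R) (hgR : ∀ x ∈ S, g x ∈ R)
    (hf : ∀ x ∈ S, ∀ y ∈ S, MetricTriple (d x y) (f x) (f y))
    (hg : ∀ x ∈ S, ∀ y ∈ S, MetricTriple (d x y) (g x) (g y)) :
    ∃ y ∈ R, ∀ x ∈ S, MetricTriple y (f x) (g x) := by
  obtain ⟨s1, hs1, h1⟩ := S.exists_max_image (fun x => |f x - g x|) hS
  obtain ⟨s2, hs2, h2⟩ := S.exists_min_image (fun x => f x + g x) hS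
  obtain ⟨y, hy, Ty1, Ty2⟩ := fourValues_pair h4 (hdR s1 hs1 s2 hs2)
    (hfR s1 hs1) (hfR s2 hs2) (hgR s1 hs1) (hgR s2 hs2) (hf s1 hs1 s2 hs2) (hg s1 hs1 s2 hs2)
  refine ⟨y, hy, fun x hx => ?_⟩
  have k1 : |f x - g x| ≤ |f s1 - g s1| := h1 x hx
  have k2 : f s2 + g s2 ≤ f x + g x := h2 x hx
  rw [mt_iff] at Ty1 Ty2 ⊢
  have m1 : |f s1 - g s1| ≤ y := abs_sub_le_iff.mpr ⟨by linarith [Ty1.2.1], by linarith [Ty1.2.2]⟩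
  have m2 := abs_sub_le_iff.mp (le_trans k1 m1)
  exact ⟨by linarith [Ty2.1], by linarith [m2.1, m2.2], by linarith [m2.1, m2.2]⟩

end S6
namespace S6
open Finset

/-- A partial metric with values in `R` on a finite subset. -/
structure Good (R : Set ℝ) {T : Type*} (S : Finset T) (E : T → T → ℝ) : Prop where
  symm : ∀ x ∈ S, ∀ y ∈ S, E x y = E y x
  self : ∀ x ∈ S, E x x = 0
  tri : ∀ x ∈ S, ∀ y ∈ S, ∀ z ∈ S, E x z ≤ E x y + E y z
  memR : ∀ x ∈ S, ∀ y ∈ S, E x y ∈ R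
  pos : ∀ x ∈ S, ∀ y ∈ S, x ≠ y → 0 < E x y

theorem Good.mt {R : Set ℝ} {T : Type*} {S : Finset T} {E : T → T → ℝ} (h : Good R S E)
    {x y z : T} (hx : x ∈ S) (hy : y ∈ S) (hz : z ∈ S) :
    MetricTriple (E x y) (E z x) (E z y) := by
  rw [mt_iff]
  have t1 := h.tri x hx z hz y hy
  have t2 := h.tri z hz y hy x hx
  have t3 := h.tri z hz x hx y hy
  have s1 := h.symm x hx z hz
  have s2 := h.symm y hy x hx
  exact ⟨by linarith, by linarith, by linarith⟩

theorem Good.nonneg {R : Set ℝ} (hR : R ⊆ Set.Ici 0) {T : Type*} {S : Finset T}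
    {E : T → T → ℝ} (h : Good R S E) {x y : T} (hx : x ∈ S) (hy : y ∈ S) : 0 ≤ E x y :=
  hR (h.memR x hx y hy)

/-- Extension of a consistent partial type over a finite partial metric, via 4-values. -/
theorem extend {R : Set ℝ} (h4 : FourValues R) (hR : R ⊆ Set.Ici 0) {T : Type*}
    [DecidableEq T] (S : Finset T) (E : T → T → ℝ) (hE : Good R S E) :
    ∀ (B : Finset T) (t₀ : T → ℝ), B.Nonempty → B ⊆ S →
      (∀ x ∈ B, t₀ x ∈ R) → (∀ x ∈ B, ∀ y ∈ B, MetricTriple (E x y) (t₀ x) (t₀ y)) →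
      ∃ t : T → ℝ, (∀ x ∈ B, t x = t₀ x) ∧ (∀ x ∈ S, t x ∈ R) ∧
        (∀ x ∈ S, ∀ y ∈ S, MetricTriple (E x y) (t x) (t y)) := by
  suffices H : ∀ (n : ℕ) (B : Finset T) (t₀ : T → ℝ), (S \ B).card = n → B.Nonempty → B ⊆ S →
      (∀ x ∈ B, t₀ x ∈ R) → (∀ x ∈ B, ∀ y ∈ B, MetricTriple (E x y) (t₀ x) (t₀ y)) →
      ∃ t : T → ℝ, (∀ x ∈ B, t x = t₀ x) ∧ (∀ x ∈ S, t x ∈ R) ∧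
        (∀ x ∈ S, ∀ y ∈ S, MetricTriple (E x y) (t x) (t y)) by
    exact fun B t₀ => H _ B t₀ rfl
  intro n
  induction n using Nat.strong_induction_on with
  | _ n IH =>
    intro B t₀ hcard hne hBS ht₀R ht₀c
    by_cases hSB : S ⊆ B
    · exact ⟨t₀, fun x _ => rfl, fun x hx => ht₀R x (hSB hx),
        fun x hx y hy => ht₀c x (hSB hx) y (hSB hy)⟩
    · obtain ⟨z, hzS, hzB⟩ := Finset.not_subset.mp hSB
      obtain ⟨y, hyR, hyT⟩ := amalg h4 B hne E t₀ (fun x => E z x)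
        (fun x hx y' hy' => hE.memR x (hBS hx) y' (hBS hy'))
        ht₀R (fun x hx => hE.memR z hzS x (hBS hx)) ht₀c
        (fun x hx y' hy' => hE.mt (hBS hx) (hBS hy') hzS)
      have hy0 : (0:ℝ) ≤ y := hR hyR
      have hcard' : (S \ insert z B).card < n := by
        rw [← hcard]
        apply Finset.card_lt_card
        constructor
        · exact Finset.sdiff_subset_sdiff le_rfl (Finset.subset_insert z B)
        · intro hsub
          exact (Finset.mem_sdiff.mp (hsub (Finset.mem_sdiff.mpr ⟨hzS, hzB⟩))).2
            (Finset.mem_insert_self z B)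
      have hnez : ∀ w ∈ B, w ≠ z := fun w hw => ne_of_mem_of_not_mem hw hzB
      have hval : ∀ w ∈ B, Function.update t₀ z y w = t₀ w :=
        fun w hw => Function.update_of_ne (hnez w hw) _ _
      obtain ⟨t, ht1, ht2, ht3⟩ := IH _ hcard' (insert z B) (Function.update t₀ z y) rfl
        ⟨z, Finset.mem_insert_self z B⟩ (Finset.insert_subset hzS hBS)
        (by
          intro u hu
          rcases Finset.mem_insert.mp hu with hu' | hu'
          · rw [hu']; rwa [Function.update_self]
          · rw [hval u hu']; exact ht₀R u hu')
        (by
          intro u hu v hv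
          rcases Finset.mem_insert.mp hu with hu' | hu' <;>
            rcases Finset.mem_insert.mp hv with hv' | hv'
          · rw [hu', hv']
            rw [Function.update_self, hE.self z hzS, mt_iff]
            exact ⟨by linarith, by linarith, by linarith⟩
          · rw [hu']
            rw [Function.update_self, hval v hv']
            have h5 := mt_iff.mp (hyT v hv')
            rw [mt_iff]
            exact ⟨by linarith [h5.1, h5.2.1, h5.2.2], by linarith [h5.1, h5.2.1, h5.2.2],
              by linarith [h5.1, h5.2.1, h5.2.2]⟩
          · rw [hv']
            rw [Function.update_self, hval u hu', hE.symm u (hBS hu') z hzS]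
            have h5 := mt_iff.mp (hyT u hu')
            rw [mt_iff]
            exact ⟨by linarith [h5.1, h5.2.1, h5.2.2], by linarith [h5.1, h5.2.1, h5.2.2],
              by linarith [h5.1, h5.2.1, h5.2.2]⟩
          · rw [hval u hu', hval v hv']
            exact ht₀c u hu' v hv')
      refine ⟨t, fun x hx => ?_, ht2, ht3⟩
      rw [ht1 x (Finset.mem_insert_of_mem hx), hval x hx]

end S6
namespace S6
open Finset

/-- Adjoining one point with a consistent positive type to a partial metric. -/
theorem addPoint {R : Set ℝ} (hR : R ⊆ Set.Ici 0) {T : Type*} [DecidableEq T]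
    {S : Finset T} {E : T → T → ℝ} (hE : Good R S E) {z : T} (hz : z ∉ S) {t : T → ℝ}
    (htR : ∀ x ∈ S, t x ∈ R) (h0 : (0:ℝ) ∈ R)
    (htc : ∀ x ∈ S, ∀ y ∈ S, MetricTriple (E x y) (t x) (t y))
    (htpos : ∀ x ∈ S, 0 < t x) :
    Good R (insert z S)
      (fun x y => if x = z then (if y = z then 0 else t y) else if y = z then t x else E x y) := by
  have hne : ∀ w ∈ S, w ≠ z := fun w hw => ne_of_mem_of_not_mem hw hz
  have htnn : ∀ x ∈ S, 0 ≤ t x := fun x hx => le_of_lt (htpos x hx)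
  constructor
  · intro x hx y hy
    rcases Finset.mem_insert.mp hx with hx' | hx' <;> rcases Finset.mem_insert.mp hy with hy' | hy'
    · simp [hx', hy']
    · simp [hx', hne y hy']
    · simp [hy', hne x hx']
    · simp [hne x hx', hne y hy', hE.symm x hx' y hy']
  · intro x hx
    rcases Finset.mem_insert.mp hx with hx' | hx'
    · simp [hx']
    · simp [hne x hx', hE.self x hx']
  · intro x hx y hy w hw
    rcases Finset.mem_insert.mp hx with hx' | hx' <;>
      rcases Finset.mem_insert.mp hy with hy' | hy' <;>
      rcases Finset.mem_insert.mp hw with hw' | hw'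
    · simp [hx', hy', hw']
    · simp [hx', hy', hne w hw']
    · simp [hx', hw', if_pos rfl, hne y hy', if_neg (hne y hy')]
      linarith [htnn y hy']
    · simp [hx', if_pos rfl, if_neg (hne y hy'), if_neg (hne w hw')]
      have := mt_iff.mp (htc y hy' w hw')
      linarith [this.1, this.2.1, this.2.2, hE.symm y hy' w hw']
    · simp [hy', hw', hne x hx']
    · simp [hy', if_pos rfl, if_neg (hne x hx'), if_neg (hne w hw')]
      have := mt_iff.mp (htc x hx' w hw')
      linarith [this.1, this.2.1, this.2.2, hE.symm x hx' w hw']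
    · simp [hw', if_pos rfl, if_neg (hne x hx'), if_neg (hne y hy')]
      have := mt_iff.mp (htc x hx' y hy')
      linarith [this.1, this.2.1, this.2.2]
    · simp [if_neg (hne x hx'), if_neg (hne y hy'), if_neg (hne w hw')]
      exact hE.tri x hx' y hy' w hw'
  · intro x hx y hy
    rcases Finset.mem_insert.mp hx with hx' | hx' <;> rcases Finset.mem_insert.mp hy with hy' | hy'
    · simp [hx', hy', h0]
    · simpa [hx', hne y hy'] using htR y hy'
    · simpa [hy', hne x hx'] using htR x hx'
    · simpa [hne x hx', hne y hy'] using hE.memR x hx' y hy'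
  · intro x hx y hy hxy
    rcases Finset.mem_insert.mp hx with hx' | hx' <;> rcases Finset.mem_insert.mp hy with hy' | hy'
    · exact absurd (hx'.trans hy'.symm) hxy
    · simpa [hx', hne y hy'] using htpos y hy'
    · simpa [hy', hne x hx'] using htpos x hx'
    · simpa [hne x hx', hne y hy'] using hE.pos x hx' y hy' hxy

end S6
namespace S6
open Finset

theorem IsMetricOn.nonneg' {α : Type*} {d : α → α → ℝ} (h : IsMetricOn d) (i j : α) :
    0 ≤ d i j := by
  have h1 := h.2.2.1 i j i
  have h2 := h.2.1 i j
  have h3 := h.1 i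
  linarith

theorem IsMetricOn.pos' {α : Type*} {d : α → α → ℝ} (h : IsMetricOn d) {i j : α} (hij : i ≠ j) :
    0 < d i j := by
  rcases lt_or_eq_of_le (IsMetricOn.nonneg' h i j) with h' | h'
  · exact h'
  · exact absurd (h.2.2.2 i j h'.symm) hij

theorem IsMetricOn.mt' {α : Type*} {d : α → α → ℝ} (h : IsMetricOn d) (i j l : α) :
    MetricTriple (d i j) (d l i) (d l j) := by
  rw [mt_iff]
  have t1 := h.2.2.1 i l j
  have t2 := h.2.2.1 l j i
  have t3 := h.2.2.1 l i j
  have s1 := h.2.1 i l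
  have s2 := h.2.1 j i
  exact ⟨by linarith, by linarith, by linarith⟩

/-- The finite set of the first `k` pairs of points. -/
def Sk (n k : ℕ) : Finset (Fin n ⊕ Fin n) :=
  Finset.univ.filter (fun x => Sum.elim Fin.val Fin.val x < k)

theorem mem_Sk {n k : ℕ} {x : Fin n ⊕ Fin n} :
    x ∈ Sk n k ↔ Sum.elim Fin.val Fin.val x < k := by
  simp [Sk]

theorem Sk_succ {n k : ℕ} (hk : k < n) :
    Sk n (k + 1) = insert (Sum.inr (⟨k, hk⟩ : Fin n)) (insert (Sum.inl (⟨k, hk⟩ : Fin n)) (Sk n k)) := by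
  ext x
  simp only [mem_Sk, Finset.mem_insert]
  constructor
  · intro hx
    rcases x with i | i
    · simp only [Sum.elim_inl] at hx
      rcases Nat.lt_succ_iff_lt_or_eq.mp hx with h | h
      · exact Or.inr (Or.inr h)
      · exact Or.inr (Or.inl (by simp [Fin.ext_iff, h]))
    · simp only [Sum.elim_inr] at hx
      rcases Nat.lt_succ_iff_lt_or_eq.mp hx with h | h
      · exact Or.inr (Or.inr h)
      · exact Or.inl (by simp [Fin.ext_iff, h])
  · rintro (rfl | rfl | hx)
    · simp
    · simp
    · exact Nat.lt_succ_of_lt hx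

end S6
namespace S6
open Finset

theorem amalgam {R : Set ℝ} (h4 : FourValues R) (hR : R ⊆ Set.Ici 0) (h0 : (0:ℝ) ∈ R)
    {n : ℕ} {p q : Fin n → Fin n → ℝ} {s : Fin n → ℝ} {δ : ℝ}
    (hp : IsMetricOn p) (hq : IsMetricOn q)
    (hpR : ∀ i j, p i j ∈ R) (hqR : ∀ i j, q i j ∈ R)
    (hsR : ∀ i, s i ∈ R) (hspos : ∀ i, 0 < s i)
    (hδ : 0 ≤ δ) (hpq : ∀ i j, |p i j - q i j| ≤ δ)
    (hss : ∀ i j : Fin n, i < j → s i + δ ≤ s j)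
    (hsp : ∀ i j : Fin n, i ≠ j → ∀ l, 2 * (s l + δ) ≤ p i j) :
    ∃ E : (Fin n ⊕ Fin n) → (Fin n ⊕ Fin n) → ℝ,
      Good R Finset.univ E ∧ (∀ i j, E (Sum.inl i) (Sum.inl j) = p i j) ∧
        (∀ i j, E (Sum.inr i) (Sum.inr j) = q i j) ∧ (∀ i, E (Sum.inl i) (Sum.inr i) = s i) := by
  classical
  suffices H : ∀ k, k ≤ n → ∃ E : (Fin n ⊕ Fin n) → (Fin n ⊕ Fin n) → ℝ,
      Good R (Sk n k) E ∧
      (∀ i j : Fin n, i.val < k → j.val < k → E (Sum.inl i) (Sum.inl j) = p i j) ∧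
      (∀ i j : Fin n, i.val < k → j.val < k → E (Sum.inr i) (Sum.inr j) = q i j) ∧
      (∀ i : Fin n, i.val < k → E (Sum.inl i) (Sum.inr i) = s i) by
    obtain ⟨E, hG, h1, h2, h3⟩ := H n le_rfl
    have huniv : Sk n n = Finset.univ := by
      ext x
      simp only [mem_Sk, Finset.mem_univ, iff_true]
      rcases x with i | i <;> exact i.isLt
    rw [huniv] at hG
    exact ⟨E, hG, fun i j => h1 i j i.isLt j.isLt, fun i j => h2 i j i.isLt j.isLt,
      fun i => h3 i i.isLt⟩
  intro k
  induction k with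
  | zero =>
    intro _
    refine ⟨fun _ _ => 0, ?_, ?_, ?_, ?_⟩
    · constructor <;> intro x hx <;> simp [mem_Sk] at hx
    · intro i j hi hj; exact absurd hj (Nat.not_lt_zero _)
    · intro i j hi hj; exact absurd hj (Nat.not_lt_zero _)
    · intro i hi; exact absurd hi (Nat.not_lt_zero _)
  | succ k IH =>
    intro hk1
    have hk : k < n := hk1
    obtain ⟨E, hE, hll, hrr, hlr⟩ := IH (le_of_lt hk)
    set kk : Fin n := ⟨k, hk⟩ with hkk
    -- basic facts
    have hpnn := IsMetricOn.nonneg' hp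
    have hqnn := IsMetricOn.nonneg' hq
    have hkne : ∀ i : Fin n, i.val < k → i ≠ kk := by
      intro i hi h; rw [h] at hi; exact Nat.lt_irrefl k hi
    have hlL : ∀ i : Fin n, i.val < k → Sum.inl i ∈ Sk n k := fun i hi => mem_Sk.mpr hi
    have hrL : ∀ i : Fin n, i.val < k → Sum.inr i ∈ Sk n k := fun i hi => mem_Sk.mpr hi
    -- Step 1 : the type of the new left point over Sk n k
    have hTF : ∃ tf : (Fin n ⊕ Fin n) → ℝ,
        (∀ i : Fin n, i.val < k → tf (Sum.inl i) = p kk i) ∧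
        (∀ x ∈ Sk n k, tf x ∈ R) ∧
        (∀ x ∈ Sk n k, ∀ y ∈ Sk n k, MetricTriple (E x y) (tf x) (tf y)) := by
      rcases Nat.eq_zero_or_pos k with hk0 | hk0
      · refine ⟨fun _ => 0, ?_, ?_, ?_⟩
        · intro i hi; omega
        · intro x hx; rw [mem_Sk] at hx; omega
        · intro x hx; rw [mem_Sk] at hx; omega
      · set Bf : Finset (Fin n ⊕ Fin n) := (Sk n k).filter (fun x => Sum.isLeft x = true) with hBf
        have hBfm : ∀ x, x ∈ Bf ↔ ∃ i : Fin n, i.val < k ∧ x = Sum.inl i := by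
          intro x
          rcases x with i | i <;> simp [hBf, mem_Sk]
        have hBfne : Bf.Nonempty := by
          refine ⟨Sum.inl ⟨0, lt_of_lt_of_le hk0 (le_of_lt hk)⟩, ?_⟩
          rw [hBfm]; exact ⟨_, hk0, rfl⟩
        obtain ⟨tf, htf0, htfR, htfc⟩ := extend h4 hR (Sk n k) E hE Bf
          (fun x => p kk (Sum.elim id id x)) hBfne (Finset.filter_subset _ _)
          (by
            intro x hx
            obtain ⟨i, hi, rfl⟩ := (hBfm x).mp hx
            exact hpR kk i)
          (by
            intro x hx y hy
            obtain ⟨i, hi, rfl⟩ := (hBfm x).mp hx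
            obtain ⟨j, hj, rfl⟩ := (hBfm y).mp hy
            rw [hll i j hi hj]
            exact IsMetricOn.mt' hp i j kk)
        refine ⟨tf, ?_, htfR, htfc⟩
        intro i hi
        have : Sum.inl i ∈ Bf := (hBfm _).mpr ⟨i, hi, rfl⟩
        simpa using htf0 _ this
    obtain ⟨tf, htf0, htfR, htfc⟩ := hTF
    -- forcing and positivity for tf
    have htfr : ∀ j : Fin n, j.val < k → |tf (Sum.inr j) - p kk j| ≤ s j := by
      intro j hj
      have := htfc _ (hlL j hj) _ (hrL j hj)
      rw [hlr j hj, htf0 j hj] at this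
      have h5 := mt_iff.mp this
      rw [abs_sub_le_iff]
      constructor <;> linarith [h5.1, h5.2.1, h5.2.2]
    have htfpos : ∀ x ∈ Sk n k, 0 < tf x := by
      intro x hx
      rcases x with i | i <;> rw [mem_Sk] at hx <;> simp only [Sum.elim_inl, Sum.elim_inr] at hx
      · rw [htf0 i hx]; exact IsMetricOn.pos' hp (Ne.symm (hkne i hx))
      · have hf := htfr i hx
        have hb := hsp kk i (Ne.symm (hkne i hx)) i
        rw [abs_sub_le_iff] at hf
        have := hspos i
        linarith [hf.1, hf.2]
    -- Step 2 : add the new left point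
    have hzL : (Sum.inl kk : Fin n ⊕ Fin n) ∉ Sk n k := by rw [mem_Sk]; simp [hkk]
    have hE1 := addPoint hR hE hzL htfR h0 htfc htfpos
    set E1 : (Fin n ⊕ Fin n) → (Fin n ⊕ Fin n) → ℝ := fun x y =>
      if x = Sum.inl kk then (if y = Sum.inl kk then 0 else tf y)
      else if y = Sum.inl kk then tf x else E x y with hE1def
    have hE1old : ∀ x ∈ Sk n k, ∀ y ∈ Sk n k, E1 x y = E x y := by
      intro x hx y hy
      have h1 : x ≠ Sum.inl kk := ne_of_mem_of_not_mem hx hzL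
      have h2 : y ≠ Sum.inl kk := ne_of_mem_of_not_mem hy hzL
      simp [hE1def, h1, h2]
    have hE1new : ∀ x ∈ Sk n k, E1 x (Sum.inl kk) = tf x ∧ E1 (Sum.inl kk) x = tf x := by
      intro x hx
      have h1 : x ≠ Sum.inl kk := ne_of_mem_of_not_mem hx hzL
      simp [hE1def, h1]
    have hG1 : Good R (insert (Sum.inl kk) (Sk n k)) E1 := hE1
    have hSk1 : Sk n k ⊆ insert (Sum.inl kk) (Sk n k) := Finset.subset_insert _ _
    -- Step 3 : the type of the new right point
    set S' := insert (Sum.inl kk) (Sk n k) with hS'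
    set Bg : Finset (Fin n ⊕ Fin n) := insert (Sum.inl kk) ((Sk n k).filter (fun x => Sum.isRight x = true)) with hBg
    have hBgm : ∀ x, x ∈ Bg ↔ x = Sum.inl kk ∨ ∃ j : Fin n, j.val < k ∧ x = Sum.inr j := by
      intro x
      rcases x with i | i <;> simp [hBg, mem_Sk, Sum.inl.injEq]
    have hBgsub : Bg ⊆ S' := by
      intro x hx
      rcases (hBgm x).mp hx with rfl | ⟨j, hj, rfl⟩
      · exact Finset.mem_insert_self _ _
      · exact Finset.mem_insert_of_mem (hrL j hj)
    have htg0' : ∀ x, (x = Sum.inl kk → Sum.elim (fun _ => s kk) (q kk) x = s kk) := by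
      intro x h; subst h; rfl
    obtain ⟨tg, htg0, htgR, htgc⟩ := extend h4 hR S' E1 hG1 Bg
      (Sum.elim (fun _ => s kk) (q kk)) ⟨Sum.inl kk, Finset.mem_insert_self _ _⟩ hBgsub
      (by
        intro x hx
        rcases (hBgm x).mp hx with rfl | ⟨j, hj, rfl⟩
        · exact hsR kk
        · exact hqR kk j)
      (by
        intro x hx y hy
        have key : ∀ j : Fin n, j.val < k →
            MetricTriple (tf (Sum.inr j)) (s kk) (q kk j) := by
          intro j hj
          have hf := abs_sub_le_iff.mp (htfr j hj)
          have hd := abs_sub_le_iff.mp (hpq kk j)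
          have hgap := hss j kk (by rw [Fin.lt_def]; exact hj)
          have hb := hsp kk j (Ne.symm (hkne j hj)) kk
          have hsj := hspos j
          rw [mt_iff]
          exact ⟨by linarith [hf.1, hf.2, hd.1, hd.2],
            by linarith [hf.1, hf.2, hd.1, hd.2],
            by linarith [hf.1, hf.2, hd.1, hd.2]⟩
        rcases (hBgm x).mp hx with rfl | ⟨j, hj, rfl⟩ <;>
          rcases (hBgm y).mp hy with h' | ⟨j', hj', h'⟩
        · subst h'
          have : E1 (Sum.inl kk) (Sum.inl kk) = 0 := hG1.self _ (Finset.mem_insert_self _ _)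
          rw [this]
          have := hspos kk
          rw [mt_iff]; simp only [Sum.elim_inl]
          exact ⟨by linarith, by linarith, by linarith⟩
        · subst h'
          rw [(hE1new _ (hrL j' hj')).2]
          simp only [Sum.elim_inl, Sum.elim_inr]
          exact key j' hj'
        · subst h'
          rw [(hE1new _ (hrL j hj)).1]
          simp only [Sum.elim_inl, Sum.elim_inr]
          exact mt_symm (key j hj)
        · subst h'
          rw [hE1old _ (hrL j hj) _ (hrL j' hj'), hrr j j' hj hj']
          simp only [Sum.elim_inr]
          exact IsMetricOn.mt' hq j j' kk)
    have htgl : tg (Sum.inl kk) = s kk := by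
      have := htg0 _ (Finset.mem_insert_self _ _)
      simpa using this
    have htgr : ∀ j : Fin n, j.val < k → tg (Sum.inr j) = q kk j := by
      intro j hj
      have : Sum.inr j ∈ Bg := (hBgm _).mpr (Or.inr ⟨j, hj, rfl⟩)
      simpa using htg0 _ this
    have htgf : ∀ i : Fin n, i.val < k → |tg (Sum.inl i) - q kk i| ≤ s i := by
      intro i hi
      have := htgc _ (hSk1 (hrL i hi)) _ (hSk1 (hlL i hi))
      rw [hE1old _ (hrL i hi) _ (hlL i hi), hE.symm _ (hrL i hi) _ (hlL i hi),
        hlr i hi, htgr i hi] at this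
      have h5 := mt_iff.mp this
      rw [abs_sub_le_iff]
      constructor <;> linarith [h5.1, h5.2.1, h5.2.2]
    have htgpos : ∀ x ∈ S', 0 < tg x := by
      intro x hx
      rcases Finset.mem_insert.mp hx with rfl | hx
      · rw [htgl]; exact hspos kk
      · rcases x with i | i <;> rw [mem_Sk] at hx <;>
          simp only [Sum.elim_inl, Sum.elim_inr] at hx
        · have hf := abs_sub_le_iff.mp (htgf i hx)
          have hd := abs_sub_le_iff.mp (hpq kk i)
          have hb := hsp kk i (Ne.symm (hkne i hx)) i
          have := hspos i
          linarith [hf.1, hf.2, hd.1, hd.2]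
        · rw [htgr i hx]
          have hd := abs_sub_le_iff.mp (hpq kk i)
          have hb := hsp kk i (Ne.symm (hkne i hx)) i
          have := hspos i
          linarith [hd.1, hd.2]
    -- Step 4 : add the new right point
    have hzR : (Sum.inr kk : Fin n ⊕ Fin n) ∉ S' := by
      rw [hS', Finset.mem_insert, mem_Sk]
      simp [hkk]
    have hE2 := addPoint hR hG1 hzR htgR h0 htgc htgpos
    set E2 : (Fin n ⊕ Fin n) → (Fin n ⊕ Fin n) → ℝ := fun x y =>
      if x = Sum.inr kk then (if y = Sum.inr kk then 0 else tg y)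
      else if y = Sum.inr kk then tg x else E1 x y with hE2def
    have hE2old : ∀ x ∈ S', ∀ y ∈ S', E2 x y = E1 x y := by
      intro x hx y hy
      have h1 : x ≠ Sum.inr kk := ne_of_mem_of_not_mem hx hzR
      have h2 : y ≠ Sum.inr kk := ne_of_mem_of_not_mem hy hzR
      simp [hE2def, h1, h2]
    have hE2new : ∀ x ∈ S', E2 x (Sum.inr kk) = tg x ∧ E2 (Sum.inr kk) x = tg x := by
      intro x hx
      have h1 : x ≠ Sum.inr kk := ne_of_mem_of_not_mem hx hzR
      simp [hE2def, h1]
    have hGF : Good R (Sk n (k+1)) E2 := by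
      rw [Sk_succ hk]
      exact hE2
    -- final invariants
    have hmem' : ∀ i : Fin n, i.val < k + 1 → i = kk ∨ i.val < k := by
      intro i hi
      rcases Nat.lt_succ_iff_lt_or_eq.mp hi with h | h
      · exact Or.inr h
      · exact Or.inl (Fin.ext h)
    have hlkk : (Sum.inl kk : Fin n ⊕ Fin n) ∈ S' := Finset.mem_insert_self _ _
    refine ⟨E2, hGF, ?_, ?_, ?_⟩
    · intro i j hi hj
      rcases hmem' i hi with rfl | hi' <;> rcases hmem' j hj with rfl | hj'
      · rw [hE2old _ hlkk _ hlkk, hG1.self _ hlkk, hp.1]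
      · rw [hE2old _ hlkk _ (hSk1 (hlL j hj')), (hE1new _ (hlL j hj')).2, htf0 j hj']
      · rw [hE2old _ (hSk1 (hlL i hi')) _ hlkk, (hE1new _ (hlL i hi')).1, htf0 i hi',
          hp.2.1]
      · rw [hE2old _ (hSk1 (hlL i hi')) _ (hSk1 (hlL j hj')),
          hE1old _ (hlL i hi') _ (hlL j hj'), hll i j hi' hj']
    · intro i j hi hj
      rcases hmem' i hi with rfl | hi' <;> rcases hmem' j hj with rfl | hj'
      · have : (Sum.inr kk : Fin n ⊕ Fin n) ∈ Sk n (k+1) := by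
          rw [Sk_succ hk]; exact Finset.mem_insert_self _ _
        rw [hGF.self _ this, hq.1]
      · rw [(hE2new _ (hSk1 (hrL j hj'))).2, htgr j hj']
      · rw [(hE2new _ (hSk1 (hrL i hi'))).1, htgr i hi', hq.2.1]
      · rw [hE2old _ (hSk1 (hrL i hi')) _ (hSk1 (hrL j hj')),
          hE1old _ (hrL i hi') _ (hrL j hj'), hrr i j hi' hj']
    · intro i hi
      rcases hmem' i hi with rfl | hi'
      · rw [(hE2new _ hlkk).1, htgl]
      · rw [hE2old _ (hSk1 (hlL i hi')) _ (hSk1 (hrL i hi')),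
          hE1old _ (hlL i hi') _ (hrL i hi'), hlr i hi']

end S6
namespace S6
open Finset

/-- Build a `MetricSpace` structure from `IsMetricOn`. -/
noncomputable def metricOf {α : Type*} (d : α → α → ℝ) (h : IsMetricOn d) : MetricSpace α :=
  { dist := d
    dist_self := h.1
    dist_comm := h.2.1
    dist_triangle := h.2.2.1
    eq_of_dist_eq_zero := fun {x y} hxy => h.2.2.2 x y hxy }

/-- Realization of consistent `R`-valued types over finite configurations in a universal
metric space with distance set `R`. -/
theorem realize {R : Set ℝ} {U : Type} [MetricSpace U] (hU : IsUniversal U)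
    (hdU : distSet U = R) (h0 : (0:ℝ) ∈ R) {N : ℕ} (w : Fin N → U)
    (hw : Function.Injective w) (t : Fin N → ℝ) (htR : ∀ i, t i ∈ R) (htpos : ∀ i, 0 < t i)
    (htc : ∀ i j, MetricTriple (dist (w i) (w j)) (t i) (t j)) :
    ∃ z : U, ∀ i, dist z (w i) = t i := by
  classical
  set d : Option (Fin N) → Option (Fin N) → ℝ := fun x y =>
    match x, y with
    | none, none => 0
    | none, some j => t j
    | some i, none => t i
    | some i, some j => dist (w i) (w j) with hd
  have hmt : ∀ i j, dist (w i) (w j) ≤ t i + t j := by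
    intro i j; exact (mt_iff.mp (htc i j)).1
  have hmt2 : ∀ i j, t i ≤ dist (w i) (w j) + t j := by
    intro i j; exact (mt_iff.mp (htc i j)).2.1
  have hmt3 : ∀ i j, t j ≤ dist (w i) (w j) + t i := by
    intro i j; exact (mt_iff.mp (htc i j)).2.2
  have hdm : IsMetricOn d := by
    refine ⟨?_, ?_, ?_, ?_⟩
    · rintro (_ | i) <;> simp [hd]
    · rintro (_ | i) (_ | j) <;> simp [hd, dist_comm]
    · rintro (_ | i) (_ | j) (_ | l) <;> simp only [hd]
      · linarith
      · linarith [htpos l]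
      · linarith [htpos j]
      · have := hmt3 j l; have := dist_comm (w j) (w l); linarith [hmt2 l j]
      · linarith [htpos i]
      · exact hmt i l
      · linarith [hmt2 i j]
      · exact dist_triangle (w i) (w j) (w l)
    · rintro (_ | i) (_ | j)
      · exact fun _ => rfl
      · exact fun h => absurd (show t j = 0 from h) (ne_of_gt (htpos _))
      · exact fun h => absurd (show t i = 0 from h) (ne_of_gt (htpos _))
      · exact fun h => congrArg some (hw (dist_eq_zero.mp (show dist (w i) (w j) = 0 from h)))
  letI MS : MetricSpace (Option (Fin N)) := metricOf d hdm
  have hdist : ∀ a b : Option (Fin N), dist a b = d a b := fun a b => rfl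
  have hsub : distSet (Option (Fin N)) ⊆ distSet U := by
    rintro r ⟨x, y, rfl⟩
    rw [hdist]
    rcases x with _ | i <;> rcases y with _ | j <;> simp only [hd]
    · rw [hdU]; exact h0
    · rw [hdU]; exact htR j
    · rw [hdU]; exact htR i
    · exact ⟨w i, w j, rfl⟩
  obtain ⟨femb, hfemb⟩ := hU.2 (Option (Fin N)) hsub
  set F : Set U := Set.range (fun i : Fin N => femb (some i)) with hF
  have hFfin : F.Finite := Set.finite_range _
  have idx : ∀ x : F, ∃ i : Fin N, femb (some i) = (x : U) := fun x => x.2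
  set φ : F → U := fun x => w (Classical.choose (idx x)) with hφ
  have hφs : ∀ x : F, femb (some (Classical.choose (idx x))) = (x : U) :=
    fun x => Classical.choose_spec (idx x)
  have hφiso : ∀ x y : F, dist (φ x) (φ y) = dist (x : U) (y : U) := by
    intro x y
    conv_rhs => rw [← hφs x, ← hφs y]
    rw [hfemb]
    rfl
  obtain ⟨g, hg⟩ := hU.1 F hFfin φ hφiso
  have key : ∀ i : Fin N, g (femb (some i)) = w i := by
    intro i
    have hxF : femb (some i) ∈ F := Set.mem_range_self i
    have h1 : g (femb (some i)) = φ ⟨femb (some i), hxF⟩ := hg ⟨femb (some i), hxF⟩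
    rw [h1]
    set j := Classical.choose (idx ⟨femb (some i), hxF⟩) with hj
    have h2 : femb (some j) = femb (some i) := hφs ⟨femb (some i), hxF⟩
    have h3 : dist (w j) (w i) = 0 := by
      have := hfemb (some j) (some i)
      rw [h2, dist_self] at this
      rw [hdist] at this
      exact this.symm
    rw [dist_eq_zero] at h3
    show w j = w i
    exact h3
  refine ⟨g (femb none), fun i => ?_⟩
  rw [← key i, g.dist_eq, hfemb none (some i)]
  rfl

end S6
namespace S6
open Finset

theorem step {R : Set ℝ} (h4 : FourValues R) (hR : R ⊆ Set.Ici 0) (h0 : (0:ℝ) ∈ R)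
    {U : Type} [MetricSpace U] (hU : IsUniversal U) (hdU : distSet U = R)
    {n : ℕ} {p q : Fin n → Fin n → ℝ} {s : Fin n → ℝ} {δ : ℝ}
    (hp : IsMetricOn p) (hq : IsMetricOn q)
    (hpR : ∀ i j, p i j ∈ R) (hqR : ∀ i j, q i j ∈ R)
    (hsR : ∀ i, s i ∈ R) (hspos : ∀ i, 0 < s i)
    (hδ : 0 ≤ δ) (hpq : ∀ i j, |p i j - q i j| ≤ δ)
    (hss : ∀ i j : Fin n, i < j → s i + δ ≤ s j)
    (hsp : ∀ i j : Fin n, i ≠ j → ∀ l, 2 * (s l + δ) ≤ p i j)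
    (x : Fin n → U) (hx : ∀ i j, dist (x i) (x j) = p i j) :
    ∃ y : Fin n → U, (∀ i j, dist (y i) (y j) = q i j) ∧ ∀ i, dist (x i) (y i) = s i := by
  classical
  obtain ⟨E, hG, hll, hrr, hlr⟩ := amalgam h4 hR h0 hp hq hpR hqR hsR hspos hδ hpq hss hsp
  have hGm : ∀ x : Fin n ⊕ Fin n, x ∈ (Finset.univ : Finset (Fin n ⊕ Fin n)) :=
    fun _ => Finset.mem_univ _
  set σ : ℕ → Fin n → (Fin n ⊕ Fin n) := fun k i => if (i : ℕ) < k then Sum.inr i else Sum.inl i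
    with hσ
  have hσinj : ∀ k, Function.Injective (σ k) := by
    intro k i j h
    simp only [hσ] at h
    split_ifs at h <;> simp_all
  have hσsucc : ∀ (k : ℕ) (hk : k < n) (i : Fin n), i ≠ ⟨k, hk⟩ → σ (k+1) i = σ k i := by
    intro k hk i hik
    have : (i : ℕ) ≠ k := fun h => hik (Fin.ext h)
    simp only [hσ]
    rcases Nat.lt_or_ge (i : ℕ) k with h | h
    · rw [if_pos h, if_pos (Nat.lt_succ_of_lt h)]
    · have h2 : ¬ (i : ℕ) < k := Nat.not_lt.mpr h
      have h3 : ¬ (i : ℕ) < k + 1 := by omega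
      rw [if_neg h2, if_neg h3]
  suffices H : ∀ k, k ≤ n → ∃ w : Fin n → U,
      (∀ i j, dist (w i) (w j) = E (σ k i) (σ k j)) ∧
      (∀ i : Fin n, k ≤ (i : ℕ) → w i = x i) ∧
      (∀ i : Fin n, (i : ℕ) < k → dist (x i) (w i) = s i) by
    obtain ⟨w, hw1, _, hw3⟩ := H n le_rfl
    refine ⟨w, fun i j => ?_, fun i => hw3 i i.isLt⟩
    rw [hw1 i j]
    simp only [hσ, if_pos i.isLt, if_pos j.isLt]
    exact hrr i j
  intro k
  induction k with
  | zero =>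
    intro _
    refine ⟨x, fun i j => ?_, fun i _ => rfl, fun i hi => absurd hi (Nat.not_lt_zero _)⟩
    simp only [hσ, if_neg (Nat.not_lt_zero _)]
    rw [hx i j]
    exact (hll i j).symm
  | succ k IH =>
    intro hk1
    have hk : k < n := hk1
    obtain ⟨w, hw1, hw2, hw3⟩ := IH (le_of_lt hk)
    set kk : Fin n := ⟨k, hk⟩ with hkk
    have hσkk : σ k kk = Sum.inl kk := by
      simp only [hσ]
      rw [if_neg (by simp [hkk])]
    have hσkk1 : σ (k+1) kk = Sum.inr kk := by
      simp only [hσ]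
      rw [if_pos (by simp [hkk])]
    have hwinj : Function.Injective w := by
      intro i j hij
      by_contra hne
      have h1 : dist (w i) (w j) = 0 := by rw [hij, dist_self]
      rw [hw1 i j] at h1
      exact absurd h1 (ne_of_gt (hG.pos _ (hGm _) _ (hGm _)
        (fun h => hne (hσinj k h))))
    have hσne : ∀ i, σ k i ≠ Sum.inr kk := by
      intro i h
      simp only [hσ] at h
      split_ifs at h with h'
      rw [Sum.inr.injEq] at h
      rw [h] at h'
      exact Nat.lt_irrefl k h'
    obtain ⟨z, hz⟩ := realize hU hdU h0 w hwinj (fun i => E (Sum.inr kk) (σ k i))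
      (fun i => hG.memR _ (hGm _) _ (hGm _))
      (fun i => hG.pos _ (hGm _) _ (hGm _) (fun h => hσne i h.symm))
      (by
        intro i j
        rw [hw1 i j]
        exact hG.mt (hGm _) (hGm _) (hGm _))
    refine ⟨Function.update w kk z, ?_, ?_, ?_⟩
    · intro i j
      rcases eq_or_ne i kk with rfl | hi <;> rcases eq_or_ne j kk with rfl | hj
      · rw [Function.update_self, dist_self, hσkk1, hG.self _ (hGm _)]
      · rw [Function.update_self, Function.update_of_ne hj, hσkk1, hσsucc k hk j hj]
        exact hz j
      · rw [Function.update_self, Function.update_of_ne hi, hσkk1, hσsucc k hk i hi,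
          dist_comm, hz i, hG.symm _ (hGm _) _ (hGm _)]
      · rw [Function.update_of_ne hi, Function.update_of_ne hj, hσsucc k hk i hi,
          hσsucc k hk j hj]
        exact hw1 i j
    · intro i hi
      have hine : i ≠ kk := by
        intro h
        rw [h] at hi
        simp only [hkk] at hi
        omega
      rw [Function.update_of_ne hine]
      exact hw2 i (le_of_lt hi)
    · intro i hi
      rcases eq_or_ne i kk with rfl | hine
      · rw [Function.update_self, ← hw2 kk le_rfl, dist_comm, hz kk, hσkk]
        have := hG.symm (Sum.inl kk) (hGm _) (Sum.inr kk) (hGm _)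
        rw [← this, hlr kk]
      · have hi' : (i : ℕ) < k := by
          have : (i : ℕ) ≠ k := fun h => hine (Fin.ext h)
          omega
        rw [Function.update_of_ne hine]
        exact hw3 i hi'

end S6
namespace S6
open Finset

/-- A strictly increasing chain of `N` small elements of `R` with uniform gap `δ`. -/
theorem chain {R : Set ℝ} (hlim : ZeroLimit R) (N : ℕ) {ε : ℝ} (hε : 0 < ε) :
    ∃ (s : Fin N → ℝ) (δ : ℝ), (∀ i, s i ∈ R) ∧ (∀ i, 0 < s i) ∧ (∀ i, s i < ε) ∧
      0 < δ ∧ (∀ i, δ ≤ s i / 2) ∧ ∀ i j : Fin N, i < j → s i + δ ≤ s j := by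
  classical
  -- a sequence with g (n+1) < g n / 2
  set P : Type := {r : ℝ // r ∈ R ∧ 0 < r ∧ r < ε} with hP
  obtain ⟨r0, hr0R, hr0p, hr0ε⟩ := hlim ε hε
  have stepf : ∀ p : P, ∃ r : ℝ, r ∈ R ∧ 0 < r ∧ r < p.1 / 2 := by
    intro p
    obtain ⟨r, hrR, hrp, hrlt⟩ := hlim (p.1 / 2) (by linarith [p.2.2.1])
    exact ⟨r, hrR, hrp, hrlt⟩
  set g : ℕ → P := fun n => Nat.rec (⟨r0, hr0R, hr0p, hr0ε⟩ : P)
    (fun _ p => ⟨(stepf p).choose, (stepf p).choose_spec.1, (stepf p).choose_spec.2.1,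
      by
        have h1 := (stepf p).choose_spec.2.2
        have h2 := p.2.2.2
        linarith⟩) n with hg
  have hgdec : ∀ n, (g (n+1)).1 < (g n).1 / 2 := fun n => (stepf (g n)).choose_spec.2.2
  have hgpos : ∀ n, 0 < (g n).1 := fun n => (g n).2.2.1
  have hganti : ∀ a b : ℕ, a < b → (g b).1 < (g a).1 / 2 := by
    intro a b hab
    induction b with
    | zero => omega
    | succ b IHb =>
      rcases Nat.lt_succ_iff_lt_or_eq.mp hab with h | h
      · have h1 := IHb h
        have h2 := hgdec b
        have h3 := hgpos b
        linarith
      · rw [h]; exact hgdec b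
  refine ⟨fun i => (g (N - 1 - (i : ℕ))).1, (g (N - 1 - 0)).1 / 2, fun i => (g _).2.1,
    fun i => hgpos _, fun i => (g _).2.2.2, by linarith [hgpos (N - 1 - 0)], ?_, ?_⟩
  · intro i
    have : N - 1 - (i : ℕ) ≤ N - 1 - 0 := by omega
    rcases lt_or_eq_of_le this with h | h
    · have := hganti _ _ h
      have := hgpos (N - 1 - 0)
      simp only []
      linarith
    · simp only []
      rw [← h]
  · intro i j hij
    have hij' : (i : ℕ) < (j : ℕ) := hij
    have hjN : (j : ℕ) < N := j.isLt
    have hlt : N - 1 - (j : ℕ) < N - 1 - (i : ℕ) := by omega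
    have h1 := hganti _ _ hlt
    have h2 : (g (N - 1 - 0)).1 ≤ (g (N - 1 - (j : ℕ))).1 := by
      have : N - 1 - (j : ℕ) ≤ N - 1 - 0 := by omega
      rcases lt_or_eq_of_le this with h | h
      · have h3 := hganti _ _ h
        have := hgpos (N - 1 - 0)
        linarith
      · rw [h]
    linarith

end S6
namespace S6
open Finset Filter Topology

theorem sep {m : ℕ} {A : Type*} [MetricSpace A] (a : Fin m → A)
    (ha : Function.Injective a) :
    ∃ μ > 0, ∀ i j : Fin m, i ≠ j → μ ≤ dist (a i) (a j) := by
  classical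
  by_cases h : ((Finset.univ : Finset (Fin m)).offDiag).Nonempty
  · refine ⟨(Finset.univ.offDiag).inf' h (fun p => dist (a p.1) (a p.2)), ?_, ?_⟩
    · rw [gt_iff_lt, Finset.lt_inf'_iff]
      intro p hp
      have hne : p.1 ≠ p.2 := (Finset.mem_offDiag.mp hp).2.2
      exact dist_pos.mpr fun he => hne (ha he)
    · intro i j hij
      exact Finset.inf'_le (fun p => dist (a p.1) (a p.2))
        (show (i, j) ∈ Finset.univ.offDiag from
          Finset.mem_offDiag.mpr ⟨Finset.mem_univ _, Finset.mem_univ _, hij⟩)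
  · refine ⟨1, one_pos, fun i j hij => absurd ?_ h⟩
    exact ⟨(i, j), show (i, j) ∈ Finset.univ.offDiag from
      Finset.mem_offDiag.mpr ⟨Finset.mem_univ _, Finset.mem_univ _, hij⟩⟩

theorem hard {R : Set ℝ} (h4 : FourValues R) (hR : R ⊆ Set.Ici 0) (h0 : (0:ℝ) ∈ R)
    (hlim : ZeroLimit R) {U : Type} [MetricSpace U] (hU : IsUniversal U) (hdU : distSet U = R)
    {m : ℕ} {A : Type} [MetricSpace A] (a : Fin m → A) (ha : Function.Injective a)
    (H : ∀ ε > 0, ∃ dB : Fin m → Fin m → ℝ, IsMetricOn dB ∧ (∀ i j, dB i j ∈ R) ∧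
      ∀ i j, |dist (a i) (a j) - dB i j| < ε) :
    ∃ L : Fin m → UniformSpace.Completion U,
      ∀ i j, dist (L i) (L j) = dist (a i) (a j) := by
  classical
  obtain ⟨μ, hμ0, hμ⟩ := sep a ha
  have hch : ∀ n : ℕ, ∃ (s : Fin m → ℝ) (δ : ℝ), (∀ i, s i ∈ R) ∧ (∀ i, 0 < s i) ∧
      (∀ i, s i < min ((1/2)^n) (μ/8)) ∧ 0 < δ ∧ (∀ i, δ ≤ s i / 2) ∧
      ∀ i j : Fin m, i < j → s i + δ ≤ s j := by
    intro n
    obtain ⟨s, δ, h1, h2, h3, h4', h5, h6⟩ := chain hlim m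
      (ε := min ((1/2)^n) (μ/8)) (lt_min (by positivity) (by linarith))
    exact ⟨s, δ, h1, h2, h3, h4', h5, h6⟩
  choose s δ hsR hspos hsbound hδpos hδle hgap using hch
  set δ' : ℕ → ℝ := fun n => (Finset.range (n+1)).inf' Finset.nonempty_range_add_one δ with hδ'
  have hδ'pos : ∀ n, 0 < δ' n := by
    intro n
    rw [hδ', Finset.lt_inf'_iff]
    exact fun b _ => hδpos b
  have hδ'le : ∀ n, δ' n ≤ δ n :=
    fun n => Finset.inf'_le _ (Finset.self_mem_range_succ n)
  have hδ'anti : ∀ n, δ' (n+1) ≤ δ' n := by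
    intro n
    rw [hδ', Finset.le_inf'_iff]
    intro b hb
    exact Finset.inf'_le _ (Finset.mem_range.mpr (Nat.lt_succ_of_lt (Finset.mem_range.mp hb)))
  set εf : ℕ → ℝ := fun n => min (δ' n) (min ((1/2)^n) (μ/4)) / 2 with hεf
  have hεpos : ∀ n, 0 < εf n := by
    intro n
    have := hδ'pos n
    have : (0:ℝ) < min (δ' n) (min ((1/2)^n) (μ/4)) :=
      lt_min this (lt_min (by positivity) (by linarith))
    rw [hεf]
    linarith
  have hεμ : ∀ n, εf n ≤ μ/8 := by
    intro n
    have h1 : min (δ' n) (min ((1/2)^n) (μ/4)) ≤ μ/4 :=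
      le_trans (min_le_right _ _) (min_le_right _ _)
    rw [hεf]; dsimp only; linarith
  have hεδ : ∀ n, εf n ≤ δ' n / 2 := by
    intro n
    have h1 : min (δ' n) (min ((1/2)^n) (μ/4)) ≤ δ' n := min_le_left _ _
    rw [hεf]; dsimp only; linarith
  have hεhalf : ∀ n, εf n ≤ (1/2)^n := by
    intro n
    have h1 : min (δ' n) (min ((1/2)^n) (μ/4)) ≤ (1/2)^n :=
      le_trans (min_le_right _ _) (min_le_left _ _)
    have h2 : (0:ℝ) < (1/2)^n := by positivity
    rw [hεf]; dsimp only; linarith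
  have hdB' : ∀ n : ℕ, ∃ dB : Fin m → Fin m → ℝ, IsMetricOn dB ∧ (∀ i j, dB i j ∈ R) ∧
      ∀ i j, |dist (a i) (a j) - dB i j| < εf n := fun n => H (εf n) (hεpos n)
  choose dB hdBm hdBR hdBa using hdB'
  have hdBlow : ∀ n, ∀ i j : Fin m, i ≠ j → 3*μ/4 ≤ dB n i j := by
    intro n i j hij
    have h1 := abs_sub_lt_iff.mp (hdBa n i j)
    have h2 := hμ i j hij
    have h3 := hεμ n
    linarith [h1.1, h1.2]
  have hstep : ∀ n (w : Fin m → U), (∀ i j, dist (w i) (w j) = dB n i j) →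
      ∃ w' : Fin m → U, (∀ i j, dist (w' i) (w' j) = dB (n+1) i j) ∧
        ∀ i, dist (w i) (w' i) = s n i := by
    intro n w hw
    apply step h4 hR h0 hU hdU (hdBm n) (hdBm (n+1)) (hdBR n) (hdBR (n+1)) (hsR n)
      (hspos n) (le_of_lt (hδ'pos n)) ?_ ?_ ?_ w hw
    · intro i j
      have h1 := abs_sub_lt_iff.mp (hdBa n i j)
      have h2 := abs_sub_lt_iff.mp (hdBa (n+1) i j)
      have h3 := hεδ n
      have h4' := hεδ (n+1)
      have h5 := hδ'anti n
      rw [abs_sub_le_iff]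
      constructor <;> linarith [h1.1, h1.2, h2.1, h2.2]
    · intro i j hij
      have := hgap n i j hij
      have := hδ'le n
      linarith
    · intro i j hij l
      have h1 := hdBlow n i j hij
      have h2 := hsbound n l
      have h3 := hδ'le n
      have h4' := hδle n l
      have h5 : s n l < μ/8 := lt_of_lt_of_le h2 (min_le_right _ _)
      linarith
  have hx0 : ∃ w : Fin m → U, ∀ i j, dist (w i) (w j) = dB 0 i j := by
    letI M0 : MetricSpace (Fin m) := metricOf (dB 0) (hdBm 0)
    have hsub : distSet (Fin m) ⊆ distSet U := by
      rintro r ⟨i, j, rfl⟩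
      rw [hdU]
      exact hdBR 0 i j
    obtain ⟨w, hw⟩ := hU.2 (Fin m) hsub
    exact ⟨w, fun i j => by rw [hw i j]; rfl⟩
  obtain ⟨x0, hx00⟩ := hx0
  have hstep' : ∀ n, ∀ w : {w : Fin m → U // ∀ i j, dist (w i) (w j) = dB n i j},
      {w' : Fin m → U // (∀ i j, dist (w' i) (w' j) = dB (n+1) i j) ∧
        ∀ i, dist (w.1 i) (w' i) = s n i} :=
    fun n w => ⟨(hstep n w.1 w.2).choose, (hstep n w.1 w.2).choose_spec⟩
  set X : ∀ n : ℕ, {w : Fin m → U // ∀ i j, dist (w i) (w j) = dB n i j} :=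
    fun n => Nat.rec ⟨x0, hx00⟩ (fun n w => ⟨(hstep' n w).1, (hstep' n w).2.1⟩) n with hX
  have hmv : ∀ n i, dist ((X n).1 i) ((X (n+1)).1 i) = s n i :=
    fun n i => (hstep' n (X n)).2.2 i
  set c : Fin m → ℕ → UniformSpace.Completion U :=
    fun i n => ((X n).1 i : UniformSpace.Completion U) with hc
  have hcdist : ∀ (n : ℕ) (i j : Fin m), dist (c i n) (c j n) = dB n i j := by
    intro n i j
    rw [hc]
    dsimp only
    rw [UniformSpace.Completion.dist_eq]
    exact (X n).2 i j
  have hcau : ∀ i, CauchySeq (c i) := by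
    intro i
    apply cauchySeq_of_le_geometric (1/2) 1 (by norm_num)
    intro n
    have h1 : dist (c i n) (c i (n+1)) = s n i := by
      rw [hc]
      dsimp only
      rw [UniformSpace.Completion.dist_eq]
      exact hmv n i
    rw [h1, one_mul]
    exact le_of_lt (lt_of_lt_of_le (hsbound n i) (min_le_left _ _))
  have hlimX : ∀ i, ∃ L, Tendsto (c i) atTop (𝓝 L) :=
    fun i => cauchySeq_tendsto_of_complete (hcau i)
  choose L hL using hlimX
  refine ⟨L, fun i j => ?_⟩
  have h1 : Tendsto (fun n => dist (c i n) (c j n)) atTop (𝓝 (dist (L i) (L j))) :=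
    (hL i).dist (hL j)
  have h2 : Tendsto (fun n => dist (c i n) (c j n)) atTop (𝓝 (dist (a i) (a j))) := by
    have heq : (fun n => dist (c i n) (c j n)) = fun n => dB n i j :=
      funext fun n => hcdist n i j
    rw [heq]
    have hbb : ∀ n, |dB n i j - dist (a i) (a j)| ≤ (1/2)^n := by
      intro n
      rw [abs_sub_comm]
      exact le_trans (le_of_lt (hdBa n i j)) (hεhalf n)
    have hhalf : Tendsto (fun n : ℕ => ((1:ℝ)/2)^n) atTop (𝓝 0) :=
      tendsto_pow_atTop_nhds_zero_of_lt_one (by norm_num) (by norm_num)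
    have h3 : Tendsto (fun n => dB n i j - dist (a i) (a j)) atTop (𝓝 0) :=
      squeeze_zero_norm (fun n => by simpa [Real.norm_eq_abs] using hbb n) hhalf
    have h4' := h3.add (tendsto_const_nhds (x := dist (a i) (a j)) (f := atTop))
    simpa using h4'
  exact tendsto_nhds_unique h1 h2

end S6
namespace S6
open Finset Filter Topology

theorem easy {R : Set ℝ} {U : Type} [MetricSpace U] (hdU : distSet U = R)
    {m : ℕ} {A : Type} [MetricSpace A] (a : Fin m → A) (hainj : Function.Injective a)
    (f : A → UniformSpace.Completion U) (hf : ∀ x y, dist (f x) (f y) = dist x y) :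
    ∀ ε > 0, ∃ dB : Fin m → Fin m → ℝ, IsMetricOn dB ∧ (∀ i j, dB i j ∈ R) ∧
      ∀ i j, |dist (a i) (a j) - dB i j| < ε := by
  intro ε hε
  classical
  obtain ⟨μ, hμ0, hμ⟩ := sep a hainj
  set ε' := min ε μ / 2 with hε'
  have hε'0 : 0 < ε' := by
    have := lt_min hε hμ0
    rw [hε']; linarith
  have hpick : ∀ i : Fin m, ∃ u : U, dist (f (a i)) ((u : UniformSpace.Completion U)) < ε'/2 := by
    intro i
    exact Metric.denseRange_iff.mp (UniformSpace.Completion.denseRange_coe (α := U))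
      (f (a i)) (ε'/2) (by linarith)
  choose u hu using hpick
  have hdd : ∀ i j : Fin m, |dist (u i) (u j) - dist (a i) (a j)| < ε' := by
    intro i j
    have h1 := dist_dist_dist_le ((u i : UniformSpace.Completion U)) ((u j))
      (f (a i)) (f (a j))
    rw [UniformSpace.Completion.dist_eq, hf, Real.dist_eq, dist_comm _ (f (a i)),
      dist_comm _ (f (a j))] at h1
    have h2 := hu i
    have h3 := hu j
    calc |dist (u i) (u j) - dist (a i) (a j)| ≤ _ := h1
    _ < ε' := by linarith
  refine ⟨fun i j => dist (u i) (u j),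
    ⟨fun i => dist_self _, fun i j => dist_comm _ _, fun i j k => dist_triangle _ _ _, ?_⟩,
    fun i j => ?_, fun i j => ?_⟩
  · intro i j hij0
    by_contra hne
    have h1 := hμ i j hne
    have h2 := abs_sub_lt_iff.mp (hdd i j)
    have h3 : ε' ≤ μ / 2 := by
      rw [hε']
      have := min_le_right ε μ
      linarith
    rw [show dist (u i) (u j) = 0 from hij0] at h2
    linarith [h2.1, h2.2]
  · rw [← hdU]
    exact ⟨u i, u j, rfl⟩
  · have h2 := abs_sub_lt_iff.mp (hdd i j)
    have h3 : ε' ≤ ε / 2 := by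
      rw [hε']
      have := min_le_left ε μ
      linarith
    rw [abs_sub_lt_iff]
    constructor <;> linarith [h2.1, h2.2]

end S6

/-- Let `0 ∈ R ⊆ [0,∞)` be countable, satisfying the 4-values condition, with
`0` as a limit point, and let `M` be the completion of a countable universal metric space `U`
with distance set `R`. A finite metric space `A = {a_0, …, a_{m-1}}` embeds isometrically
into `M` iff for every `ε > 0` there is a metric space `B = {b_0, …, b_{m-1}}` with
distances in `R` such that `|d_A(a_i, a_j) - d_B(b_i, b_j)| < ε` for all `i, j < m`. -/
theorem statement6 (R : Set ℝ) (hR : R ⊆ Set.Ici 0) (h0 : (0 : ℝ) ∈ R)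
    (hcount : R.Countable) (h4 : FourValues R) (hlim : ZeroLimit R)
    (U : Type) [MetricSpace U] [Countable U] (hU : IsUniversal U) (hdU : distSet U = R)
    (m : ℕ) (A : Type) [MetricSpace A] (a : Fin m → A) (ha : Function.Bijective a) :
    (∃ f : A → UniformSpace.Completion U,
        ∀ x y : A, dist (f x) (f y) = dist x y) ↔
      ∀ ε > 0, ∃ dB : Fin m → Fin m → ℝ, IsMetricOn dB ∧ (∀ i j, dB i j ∈ R) ∧
        ∀ i j, |dist (a i) (a j) - dB i j| < ε := by
  constructor
  · rintro ⟨f, hf⟩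
    exact S6.easy hdU a ha.injective f hf
  · intro H
    obtain ⟨L, hL⟩ := S6.hard h4 hR h0 hlim hU hdU a ha.injective H
    set e := Equiv.ofBijective a ha with he
    refine ⟨fun z => L (e.symm z), fun x y => ?_⟩
    rw [hL (e.symm x) (e.symm y)]
    have h1 : a (e.symm x) = x := e.apply_symm_apply x
    have h2 : a (e.symm y) = y := e.apply_symm_apply y
    rw [h1, h2]
end
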